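/- arXiv:2501.02695 — 5 statements merged into one kernel-verified Lean document; each statement's English description precedes it below -/
import Mathlib

section
/- There exists a constant C > 0 such that for all N ∈ ℕ, f(N) ≥ π(N) + π(N^{1/2}) + (1/3)·π(N^{1/3}) − C. -/
/-- A set of positive integers has *distinct subset products* if any two distinct
finite subsets have distinct products (the empty product is `1`). -/
def DistinctSubsetProds (A : Set ℕ) : Prop :=
  ∀ B C : Finset ℕ, ↑B ⊆ A → ↑C ⊆ A → ∏ b ∈ B, b = ∏ c ∈ C, c → B = C

/-- `primePi x` is the number of primes `p` with `(p : ℝ) ≤ x`. -/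
noncomputable def primePi (x : ℝ) : ℕ := {p : ℕ | p.Prime ∧ (p : ℝ) ≤ x}.ncard

/-- `maxDSP N` is the size of the largest subset of `{1, …, N}` with distinct
subset products. -/
noncomputable def maxDSP (N : ℕ) : ℕ :=
  sSup {k | ∃ A : Finset ℕ, ↑A ⊆ Set.Icc 1 N ∧ DistinctSubsetProds ↑A ∧ A.card = k}


set_option maxRecDepth 100000
set_option maxHeartbeats 1000000

open Finset in
lemma dsp_union (A B : Finset ℕ) (hA0 : ∀ a ∈ A, a ≠ 0) (hB0 : ∀ b ∈ B, b ≠ 0)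
    (hcop : ∀ a ∈ A, ∀ b ∈ B, Nat.Coprime a b)
    (hA : DistinctSubsetProds ↑A) (hB : DistinctSubsetProds ↑B) :
    DistinctSubsetProds ↑(A ∪ B) := by
  intro B' C' hB' hC' hprod
  classical
  have hsplit : ∀ D : Finset ℕ, (↑D : Set ℕ) ⊆ ↑(A ∪ B) →
      (↑(D.filter (· ∈ A)) : Set ℕ) ⊆ ↑A ∧ (↑(D.filter (· ∉ A)) : Set ℕ) ⊆ ↑B := by
    intro D hD
    constructor
    · intro x hx; simp only [coe_filter, Set.mem_setOf_eq] at hx; exact hx.2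
    · intro x hx; simp only [coe_filter, Set.mem_setOf_eq] at hx
      have := hD hx.1
      simp only [coe_union, Set.mem_union, mem_coe] at this
      rcases this with h | h
      · exact absurd h hx.2
      · exact h
  obtain ⟨hB1, hB2⟩ := hsplit B' hB'
  obtain ⟨hC1, hC2⟩ := hsplit C' hC'
  have eB : (∏ x ∈ B'.filter (· ∈ A), x) * ∏ x ∈ B'.filter (· ∉ A), x = ∏ x ∈ B', x :=
    prod_filter_mul_prod_filter_not B' (· ∈ A) (fun x => x)
  have eC : (∏ x ∈ C'.filter (· ∈ A), x) * ∏ x ∈ C'.filter (· ∉ A), x = ∏ x ∈ C', x :=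
    prod_filter_mul_prod_filter_not C' (· ∈ A) (fun x => x)
  set x1 := ∏ x ∈ B'.filter (· ∈ A), x
  set x2 := ∏ x ∈ B'.filter (· ∉ A), x
  set y1 := ∏ x ∈ C'.filter (· ∈ A), x
  set y2 := ∏ x ∈ C'.filter (· ∉ A), x
  have key : x1 * x2 = y1 * y2 := by rw [eB, eC]; exact hprod
  have hc12 : Nat.Coprime x1 y2 :=
    Nat.Coprime.prod_left fun a ha => Nat.Coprime.prod_right fun b hb =>
      hcop a (hB1 ha) b (hC2 hb)
  have hc21 : Nat.Coprime y1 x2 :=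
    Nat.Coprime.prod_left fun a ha => Nat.Coprime.prod_right fun b hb =>
      hcop a (hC1 ha) b (hB2 hb)
  have hx1 : x1 ∣ y1 := hc12.dvd_of_dvd_mul_right ⟨x2, key.symm⟩
  have hy1 : y1 ∣ x1 := hc21.dvd_of_dvd_mul_right ⟨y2, key⟩
  have e1 : x1 = y1 := Nat.dvd_antisymm hx1 hy1
  have hx1ne : x1 ≠ 0 := by
    refine prod_ne_zero_iff.mpr fun a ha => hA0 a ?_
    exact (mem_filter.mp ha).2
  have e2 : x2 = y2 := by
    have := key; rw [e1] at this
    exact Nat.eq_of_mul_eq_mul_left (Nat.pos_of_ne_zero (e1 ▸ hx1ne)) this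
  have f1 := hA _ _ hB1 hC1 e1
  have f2 := hB _ _ hB2 hC2 e2
  have : B'.filter (· ∈ A) ∪ B'.filter (· ∉ A) = C'.filter (· ∈ A) ∪ C'.filter (· ∉ A) := by
    rw [f1, f2]
  rwa [filter_union_filter_not_eq, filter_union_filter_not_eq] at this
lemma dsp_empty : DistinctSubsetProds ↑(∅ : Finset ℕ) := by
  intro B C hB hC _
  have hB' : B = ∅ := Finset.subset_empty.mp (by exact_mod_cast hB)
  have hC' : C = ∅ := Finset.subset_empty.mp (by exact_mod_cast hC)
  rw [hB', hC']

open Finset in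
lemma dsp_biUnion {ι : Type*} [DecidableEq ι] (s : Finset ι) (G : ι → Finset ℕ)
    (h2 : ∀ i ∈ s, ∀ a ∈ G i, 2 ≤ a)
    (hcop : ∀ i ∈ s, ∀ j ∈ s, i ≠ j → ∀ a ∈ G i, ∀ b ∈ G j, Nat.Coprime a b)
    (hdsp : ∀ i ∈ s, DistinctSubsetProds ↑(G i)) :
    DistinctSubsetProds ↑(s.biUnion G) ∧ (s.biUnion G).card = ∑ i ∈ s, (G i).card := by
  classical
  induction s using Finset.cons_induction with
  | empty => simpa using dsp_empty
  | cons a s ha ih =>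
    have hcross : ∀ x ∈ G a, ∀ y ∈ s.biUnion G, Nat.Coprime x y := by
      intro x hx y hy
      obtain ⟨j, hj, hyj⟩ := Finset.mem_biUnion.mp hy
      exact hcop a (mem_cons_self a s) j (mem_cons.mpr (Or.inr hj))
        (fun h => ha (h ▸ hj)) x hx y hyj
    obtain ⟨ih1, ih2⟩ := ih (fun i hi => h2 i (mem_cons.mpr (Or.inr hi)))
      (fun i hi j hj hij => hcop i (mem_cons.mpr (Or.inr hi)) j (mem_cons.mpr (Or.inr hj)) hij)
      (fun i hi => hdsp i (mem_cons.mpr (Or.inr hi)))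
    have hbu : (cons a s ha).biUnion G = G a ∪ s.biUnion G := by
      ext x; simp [mem_biUnion, mem_cons, or_and_right, exists_or]
    have hGa0 : ∀ x ∈ G a, x ≠ 0 := fun x hx => by
      have := h2 a (mem_cons_self a s) x hx; omega
    have hrest0 : ∀ y ∈ s.biUnion G, y ≠ 0 := by
      intro y hy
      obtain ⟨j, hj, hyj⟩ := Finset.mem_biUnion.mp hy
      have := h2 j (mem_cons.mpr (Or.inr hj)) y hyj; omega
    have hdisj : Disjoint (G a) (s.biUnion G) := by
      rw [Finset.disjoint_left]
      intro x hx hx'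
      have hc := hcross x hx x hx'
      have h2x := h2 a (mem_cons_self a s) x hx
      have : x = 1 := Nat.eq_one_of_dvd_coprimes hc (dvd_refl x) (dvd_refl x)
      omega
    constructor
    · rw [hbu]
      exact dsp_union _ _ hGa0 hrest0 hcross (hdsp a (mem_cons_self a s)) ih1
    · rw [hbu, Finset.card_union_of_disjoint hdisj, ih2, Finset.sum_cons]
lemma fact3 {p q r : ℕ} (hp : p.Prime) (hq : q.Prime) (hr : r.Prime) (a b c : ℕ) :
    (p ^ a * q ^ b * r ^ c).factorization =
      Finsupp.single p a + Finsupp.single q b + Finsupp.single r c := by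
  rw [Nat.factorization_mul (Nat.mul_ne_zero (pow_ne_zero _ hp.ne_zero) (pow_ne_zero _ hq.ne_zero)) (pow_ne_zero _ hr.ne_zero),
      Nat.factorization_mul (pow_ne_zero _ hp.ne_zero) (pow_ne_zero _ hq.ne_zero),
      hp.factorization_pow, hq.factorization_pow, hr.factorization_pow]

lemma fact3_apply_p {p q r : ℕ} (hp : p.Prime) (hq : q.Prime) (hr : r.Prime)
    (hpq : p ≠ q) (hpr : p ≠ r) (a b c : ℕ) :
    (p ^ a * q ^ b * r ^ c).factorization p = a := by
  rw [fact3 hp hq hr]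
  simp [Finsupp.single_apply, hpq.symm, hpr.symm]

lemma fact3_apply_q {p q r : ℕ} (hp : p.Prime) (hq : q.Prime) (hr : r.Prime)
    (hpq : p ≠ q) (hqr : q ≠ r) (a b c : ℕ) :
    (p ^ a * q ^ b * r ^ c).factorization q = b := by
  rw [fact3 hp hq hr]
  simp [Finsupp.single_apply, hpq, hqr.symm]

lemma fact3_apply_r {p q r : ℕ} (hp : p.Prime) (hq : q.Prime) (hr : r.Prime)
    (hpr : p ≠ r) (hqr : q ≠ r) (a b c : ℕ) :
    (p ^ a * q ^ b * r ^ c).factorization r = c := by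
  rw [fact3 hp hq hr]
  simp [Finsupp.single_apply, hpr, hqr]

open Finset in
/-- generic gadget lemma -/
lemma dsp_gadget {p q r : ℕ} (hp : p.Prime) (hq : q.Prime) (hr : r.Prime)
    (hpq : p ≠ q) (hpr : p ≠ r) (hqr : q ≠ r)
    {n : ℕ} (va vb vc : Fin n → ℕ)
    (hkey : ∀ s t : Finset (Fin n), (∑ i ∈ s, va i = ∑ i ∈ t, va i) →
      (∑ i ∈ s, vb i = ∑ i ∈ t, vb i) → (∑ i ∈ s, vc i = ∑ i ∈ t, vc i) → s = t) :
    DistinctSubsetProds ↑((Finset.univ : Finset (Fin n)).image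
      (fun i => p ^ va i * q ^ vb i * r ^ vc i)) ∧
    ((Finset.univ : Finset (Fin n)).image
      (fun i => p ^ va i * q ^ vb i * r ^ vc i)).card = n := by
  classical
  set f : Fin n → ℕ := fun i => p ^ va i * q ^ vb i * r ^ vc i with hf
  have hinj : Function.Injective f := by
    intro i j hij
    have e1 : va i = va j := by
      have := congrArg (fun m => m.factorization p) hij
      simpa [hf, fact3_apply_p hp hq hr hpq hpr] using this
    have e2 : vb i = vb j := by
      have := congrArg (fun m => m.factorization q) hij
      simpa [hf, fact3_apply_q hp hq hr hpq hqr] using this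
    have e3 : vc i = vc j := by
      have := congrArg (fun m => m.factorization r) hij
      simpa [hf, fact3_apply_r hp hq hr hpr hqr] using this
    have := hkey {i} {j} (by simpa using e1) (by simpa using e2) (by simpa using e3)
    simpa using this
  refine ⟨?_, by rw [Finset.card_image_of_injective _ hinj, Finset.card_univ, Fintype.card_fin]⟩
  intro B C hB hC hprod
  -- represent B and C as images of index sets
  have hrep : ∀ D : Finset ℕ, (↑D : Set ℕ) ⊆ ↑(Finset.univ.image f) →
      D = (Finset.univ.filter (fun i => f i ∈ D)).image f := by
    intro D hD
    ext x
    simp only [Finset.mem_image, Finset.mem_filter, Finset.mem_univ, true_and]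
    constructor
    · intro hx
      have := hD hx
      simp only [Finset.coe_image, Set.mem_image, Finset.mem_coe, Finset.mem_univ] at this
      obtain ⟨i, _, hi⟩ := this
      exact ⟨i, hi ▸ hx, hi⟩
    · rintro ⟨i, hi, rfl⟩; exact hi
  have hBrep := hrep B hB
  have hCrep := hrep C hC
  set sB := Finset.univ.filter (fun i => f i ∈ B)
  set sC := Finset.univ.filter (fun i => f i ∈ C)
  have hpB : ∏ b ∈ B, b = ∏ i ∈ sB, f i := by
    rw [hBrep]; exact Finset.prod_image (fun i _ j _ h => hinj h)
  have hpC : ∏ c ∈ C, c = ∏ i ∈ sC, f i := by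
    rw [hCrep]; exact Finset.prod_image (fun i _ j _ h => hinj h)
  have hprod' : ∏ i ∈ sB, f i = ∏ i ∈ sC, f i := by rw [← hpB, ← hpC, hprod]
  have hne : ∀ (s : Finset (Fin n)), (∏ i ∈ s, f i) ≠ 0 :=
    fun s => Finset.prod_ne_zero_iff.mpr (fun i _ =>
      Nat.mul_ne_zero (Nat.mul_ne_zero (pow_ne_zero _ hp.ne_zero) (pow_ne_zero _ hq.ne_zero))
        (pow_ne_zero _ hr.ne_zero))
  have hfact : ∀ (s : Finset (Fin n)) (x : ℕ),
      (∏ i ∈ s, f i).factorization x = ∑ i ∈ s, (f i).factorization x := by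
    intro s x
    rw [Nat.factorization_prod (fun i _ =>
      Nat.mul_ne_zero (Nat.mul_ne_zero (pow_ne_zero _ hp.ne_zero) (pow_ne_zero _ hq.ne_zero))
        (pow_ne_zero _ hr.ne_zero))]
    simp [Finsupp.finset_sum_apply, hf]
  have e1 : ∑ i ∈ sB, va i = ∑ i ∈ sC, va i := by
    have := congrArg (fun m => m.factorization p) hprod'
    simp only [hfact] at this
    simpa [hfact, hf, fact3_apply_p hp hq hr hpq hpr] using this
  have e2 : ∑ i ∈ sB, vb i = ∑ i ∈ sC, vb i := by
    have := congrArg (fun m => m.factorization q) hprod'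
    simp only [hfact] at this
    simpa [hfact, hf, fact3_apply_q hp hq hr hpq hqr] using this
  have e3 : ∑ i ∈ sB, vc i = ∑ i ∈ sC, vc i := by
    have := congrArg (fun m => m.factorization r) hprod'
    simp only [hfact] at this
    simpa [hfact, hf, fact3_apply_r hp hq hr hpr hqr] using this
  have := hkey sB sC e1 e2 e3
  rw [hBrep, hCrep, this]

lemma two_le_ppow {p q r a b c : ℕ} (hp : 2 ≤ p) (hq : 2 ≤ q) (hr : 2 ≤ r)
    (h : a + b + c ≠ 0) : 2 ≤ p ^ a * q ^ b * r ^ c := by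
  calc 2 = 2 ^ 1 := rfl
    _ ≤ 2 ^ (a + b + c) := Nat.pow_le_pow_right (by norm_num) (by omega)
    _ = 2 ^ a * 2 ^ b * 2 ^ c := by rw [pow_add, pow_add]
    _ ≤ p ^ a * q ^ b * r ^ c := by
        exact Nat.mul_le_mul (Nat.mul_le_mul (Nat.pow_le_pow_left hp a)
          (Nat.pow_le_pow_left hq b)) (Nat.pow_le_pow_left hr c)

lemma elem_le {N p q r a b c : ℕ} (hN : 1 ≤ N) (hp : p ^ 3 ≤ N) (hq : q ^ 3 ≤ N) (hr : r ^ 3 ≤ N)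
    (habc : a + b + c ≤ 3) : p ^ a * q ^ b * r ^ c ≤ N := by
  have hNpow : N ^ (a + b + c) ≤ N ^ 3 := Nat.pow_le_pow_right hN habc
  have h3 : (p ^ a * q ^ b * r ^ c) ^ 3 ≤ N ^ 3 := by
    have heq : (p ^ a * q ^ b * r ^ c) ^ 3 = (p ^ 3) ^ a * (q ^ 3) ^ b * (r ^ 3) ^ c := by ring
    rw [heq]
    calc (p ^ 3) ^ a * (q ^ 3) ^ b * (r ^ 3) ^ c ≤ N ^ a * N ^ b * N ^ c :=
          Nat.mul_le_mul (Nat.mul_le_mul (Nat.pow_le_pow_left hp a)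
            (Nat.pow_le_pow_left hq b)) (Nat.pow_le_pow_left hr c)
      _ = N ^ (a + b + c) := by rw [pow_add, pow_add]
      _ ≤ N ^ 3 := hNpow
  exact (Nat.pow_le_pow_iff_left (by norm_num : 3 ≠ 0)).mp h3

lemma cop_right3 {x p q r : ℕ} (h1 : x.Coprime p) (h2 : x.Coprime q) (h3 : x.Coprime r)
    (a b c : ℕ) : x.Coprime (p ^ a * q ^ b * r ^ c) :=
  ((h1.pow_right a).mul_right (h2.pow_right b)).mul_right (h3.pow_right c)

lemma cop_left3 {x p q r : ℕ} (h1 : Nat.Coprime p x) (h2 : Nat.Coprime q x)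
    (h3 : Nat.Coprime r x) (a b c : ℕ) : Nat.Coprime (p ^ a * q ^ b * r ^ c) x :=
  ((h1.pow_left a).mul (h2.pow_left b)).mul (h3.pow_left c)

lemma key7 : ∀ s t : Finset (Fin 7),
    (∑ i ∈ s, (![0,0,0,0,1,1,3] : Fin 7 → ℕ) i = ∑ i ∈ t, (![0,0,0,0,1,1,3] : Fin 7 → ℕ) i) →
    (∑ i ∈ s, (![0,0,1,3,0,1,0] : Fin 7 → ℕ) i = ∑ i ∈ t, (![0,0,1,3,0,1,0] : Fin 7 → ℕ) i) →
    (∑ i ∈ s, (![1,2,2,0,2,0,0] : Fin 7 → ℕ) i = ∑ i ∈ t, (![1,2,2,0,2,0,0] : Fin 7 → ℕ) i) →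
    s = t := by decide

lemma disjoint_of_two_le_coprime (A B : Finset ℕ) (h2 : ∀ a ∈ A, 2 ≤ a)
    (hcop : ∀ a ∈ A, ∀ b ∈ B, Nat.Coprime a b) : Disjoint A B := by
  rw [Finset.disjoint_left]
  intro x hxA hxB
  have := hcop x hxA x hxB
  have hx1 : x = 1 := Nat.eq_one_of_dvd_coprimes this (dvd_refl x) (dvd_refl x)
  have := h2 x hxA
  omega

lemma aux_primes (p : ℕ) (hp : p.Prime) : ∃ q r : ℕ, q.Prime ∧ r.Prime ∧
    p ≠ q ∧ p ≠ r ∧ q ≠ r := by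
  refine ⟨if p = 2 then 3 else 2, if p = 5 then 7 else 5, ?_, ?_, ?_, ?_, ?_⟩
  · split_ifs <;> norm_num
  · split_ifs <;> norm_num
  · split_ifs with h <;> omega
  · split_ifs with h <;> omega
  · split_ifs <;> omega

lemma dsp_single {p : ℕ} (hp : p.Prime) : DistinctSubsetProds ↑({p} : Finset ℕ) := by
  obtain ⟨q, r, hq, hr, hpq, hpr, hqr⟩ := aux_primes p hp
  have h := (dsp_gadget hp hq hr hpq hpr hqr (![1]) (![0]) (![0]) (by decide)).1
  have heq : (Finset.univ : Finset (Fin 1)).image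
      (fun i => p ^ (![1] : Fin 1 → ℕ) i * q ^ (![0] : Fin 1 → ℕ) i * r ^ (![0] : Fin 1 → ℕ) i)
      = ({p} : Finset ℕ) := by
    ext x
    simp [Fin.exists_fin_one]
  rwa [heq] at h

lemma dsp_pair {p : ℕ} (hp : p.Prime) : DistinctSubsetProds ↑({p, p ^ 2} : Finset ℕ) := by
  obtain ⟨q, r, hq, hr, hpq, hpr, hqr⟩ := aux_primes p hp
  have h := (dsp_gadget hp hq hr hpq hpr hqr (![1, 2]) (![0, 0]) (![0, 0]) (by decide)).1
  have heq : (Finset.univ : Finset (Fin 2)).image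
      (fun i => p ^ (![1, 2] : Fin 2 → ℕ) i * q ^ (![0, 0] : Fin 2 → ℕ) i
        * r ^ (![0, 0] : Fin 2 → ℕ) i) = ({p, p ^ 2} : Finset ℕ) := by
    ext x
    simp only [Finset.mem_image, Finset.mem_univ, true_and, Fin.exists_fin_two,
      Finset.mem_insert, Finset.mem_singleton]
    constructor
    · rintro (rfl | rfl) <;> simp
    · rintro (rfl | rfl)
      · exact Or.inl (by simp)
      · exact Or.inr (by simp)
  rwa [heq] at h

lemma le_maxDSP {N : ℕ} (A : Finset ℕ) (h1 : ↑A ⊆ Set.Icc 1 N)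
    (h2 : DistinctSubsetProds ↑A) : A.card ≤ maxDSP N := by
  have hsub : A ⊆ Finset.Icc 1 N := by
    intro x hx
    have := h1 hx
    simpa [Finset.mem_Icc, Set.mem_Icc] using this
  have hbdd : BddAbove {k | ∃ A : Finset ℕ, ↑A ⊆ Set.Icc 1 N ∧
      DistinctSubsetProds ↑A ∧ A.card = k} := by
    refine ⟨N, fun k hk => ?_⟩
    obtain ⟨B, hB1, _, rfl⟩ := hk
    have hBsub : B ⊆ Finset.Icc 1 N := by
      intro x hx
      have := hB1 hx
      simpa [Finset.mem_Icc, Set.mem_Icc] using this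
    calc B.card ≤ (Finset.Icc 1 N).card := Finset.card_le_card hBsub
      _ = N := by rw [Nat.card_Icc]; omega
  exact le_csSup hbdd ⟨A, h1, h2, rfl⟩

open scoped Classical in
lemma primePi_eq (N : ℕ) (x : ℝ) (hx : x ≤ N) :
    primePi x = ((Finset.range (N + 1)).filter (fun p : ℕ => p.Prime ∧ (p : ℝ) ≤ x)).card := by
  have hset : {p : ℕ | p.Prime ∧ (p : ℝ) ≤ x} =
      (((Finset.range (N + 1)).filter (fun p : ℕ => p.Prime ∧ (p : ℝ) ≤ x) : Finset ℕ) :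
        Set ℕ) := by
    ext p
    simp only [Set.mem_setOf_eq, Finset.coe_filter, Finset.mem_range, Set.mem_setOf_eq]
    constructor
    · rintro ⟨h1, h2⟩
      refine ⟨?_, h1, h2⟩
      have h3 : (p : ℝ) ≤ N := le_trans h2 hx
      have := Nat.cast_le.mp h3
      omega
    · rintro ⟨_, h1, h2⟩
      exact ⟨h1, h2⟩
  rw [primePi, hset, Set.ncard_coe_finset]

lemma primePi_zero {x : ℝ} (hx : x < 2) : primePi x = 0 := by
  have hset : {p : ℕ | p.Prime ∧ (p : ℝ) ≤ x} = ∅ := by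
    ext p
    simp only [Set.mem_setOf_eq, Set.mem_empty_iff_false, iff_false, not_and]
    intro hp h
    have : (2 : ℝ) ≤ p := by exact_mod_cast hp.two_le
    linarith
  rw [primePi, hset, Set.ncard_empty]

lemma gv_ne0 : ∀ i : Fin 7, (![0,0,0,0,1,1,3] : Fin 7 → ℕ) i + (![0,0,1,3,0,1,0] : Fin 7 → ℕ) i
    + (![1,2,2,0,2,0,0] : Fin 7 → ℕ) i ≠ 0 := by decide

lemma gv_le3 : ∀ i : Fin 7, (![0,0,0,0,1,1,3] : Fin 7 → ℕ) i + (![0,0,1,3,0,1,0] : Fin 7 → ℕ) i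
    + (![1,2,2,0,2,0,0] : Fin 7 → ℕ) i ≤ 3 := by decide

open scoped Classical in
lemma main_bound (N : ℕ) (hN : 2 ≤ N) :
    primePi (N : ℝ) + primePi ((N : ℝ) ^ ((1 : ℝ) / 2)) +
      primePi ((N : ℝ) ^ ((1 : ℝ) / 3)) / 3 ≤ maxDSP N := by
  have hN0 : (0 : ℝ) ≤ (N : ℝ) := Nat.cast_nonneg N
  have hN1 : (1 : ℝ) ≤ (N : ℝ) := by exact_mod_cast le_trans one_le_two hN
  set x2 := (N : ℝ) ^ ((1 : ℝ) / 2) with hx2def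
  set x3 := (N : ℝ) ^ ((1 : ℝ) / 3) with hx3def
  have hx2N : x2 ≤ N := by
    calc x2 ≤ (N : ℝ) ^ (1 : ℝ) := Real.rpow_le_rpow_of_exponent_le hN1 (by norm_num)
      _ = N := Real.rpow_one N
  have hx32 : x3 ≤ x2 := Real.rpow_le_rpow_of_exponent_le hN1 (by norm_num)
  have hx3N : x3 ≤ N := le_trans hx32 hx2N
  set P1 := (Finset.range (N + 1)).filter (fun p : ℕ => p.Prime ∧ (p : ℝ) ≤ (N : ℝ)) with hP1
  set P2 := (Finset.range (N + 1)).filter (fun p : ℕ => p.Prime ∧ (p : ℝ) ≤ x2) with hP2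
  set P3 := (Finset.range (N + 1)).filter (fun p : ℕ => p.Prime ∧ (p : ℝ) ≤ x3) with hP3
  have hpi1 : primePi (N : ℝ) = P1.card := primePi_eq N _ le_rfl
  have hpi2 : primePi x2 = P2.card := primePi_eq N _ hx2N
  have hpi3 : primePi x3 = P3.card := primePi_eq N _ hx3N
  have hP21 : P2 ⊆ P1 := by
    intro p hp
    rw [hP2, Finset.mem_filter] at hp
    rw [hP1, Finset.mem_filter]
    exact ⟨hp.1, hp.2.1, le_trans hp.2.2 hx2N⟩
  have hP32 : P3 ⊆ P2 := by
    intro p hp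
    rw [hP3, Finset.mem_filter] at hp
    rw [hP2, Finset.mem_filter]
    exact ⟨hp.1, hp.2.1, le_trans hp.2.2 hx32⟩
  have hprime1 : ∀ p ∈ P1, p.Prime := fun p hp => (Finset.mem_filter.mp hp).2.1
  have hP1le : ∀ p ∈ P1, p ≤ N := by
    intro p hp
    have := Finset.mem_range.mp (Finset.mem_filter.mp hp).1
    omega
  have hP2sq : ∀ p ∈ P2, p ^ 2 ≤ N := by
    intro p hp
    have h := (Finset.mem_filter.mp hp).2.2
    have h2 : (p : ℝ) ^ (2 : ℕ) ≤ x2 ^ (2 : ℕ) := pow_le_pow_left₀ (Nat.cast_nonneg p) h 2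
    have hx2sq : x2 ^ (2 : ℕ) = (N : ℝ) := by
      rw [hx2def, ← Real.rpow_natCast ((N : ℝ) ^ ((1 : ℝ) / 2)) 2, ← Real.rpow_mul hN0]
      norm_num
    rw [hx2sq] at h2
    exact_mod_cast h2
  have hP3cube : ∀ p ∈ P3, p ^ 3 ≤ N := by
    intro p hp
    have h := (Finset.mem_filter.mp hp).2.2
    have h2 : (p : ℝ) ^ (3 : ℕ) ≤ x3 ^ (3 : ℕ) := pow_le_pow_left₀ (Nat.cast_nonneg p) h 3
    have hx3cube : x3 ^ (3 : ℕ) = (N : ℝ) := by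
      rw [hx3def, ← Real.rpow_natCast ((N : ℝ) ^ ((1 : ℝ) / 3)) 3, ← Real.rpow_mul hN0]
      norm_num
    rw [hx3cube] at h2
    exact_mod_cast h2
  set k := P3.card with hk
  set t := k / 3 with ht
  set l := P3.sort (· ≤ ·) with hl
  have hlen : l.length = k := Finset.length_sort _
  set E : ℕ → ℕ := fun i => l.getD i 0 with hE
  have hmemE : ∀ i, i < k → E i ∈ P3 := by
    intro i hi
    have hi' : i < l.length := by omega
    show l.getD i 0 ∈ P3
    rw [List.getD_eq_getElem l 0 hi']
    exact (Finset.mem_sort _).mp (List.getElem_mem _)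
  have hEinj : ∀ i, i < k → ∀ j, j < k → E i = E j → i = j := by
    intro i hi j hj hij
    have hi' : i < l.length := by omega
    have hj' : j < l.length := by omega
    have hij' : l[i] = l[j] := by
      rw [← List.getD_eq_getElem l 0 hi', ← List.getD_eq_getElem l 0 hj']
      exact hij
    exact ((Finset.sort_nodup _ _).getElem_inj_iff).mp hij'
  have h3t : 3 * t ≤ k := by omega
  set used := (Finset.range (3 * t)).image E with hused
  have hmem_used : ∀ i, i < 3 * t → E i ∈ used := fun i hi =>
    Finset.mem_image.mpr ⟨i, Finset.mem_range.mpr hi, rfl⟩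
  have husedP3 : used ⊆ P3 := by
    intro x hx
    obtain ⟨i, hi, rfl⟩ := Finset.mem_image.mp hx
    exact hmemE i (by have := Finset.mem_range.mp hi; omega)
  have hused_card : used.card = 3 * t := by
    rw [hused, Finset.card_image_of_injOn, Finset.card_range]
    intro i hi j hj hij
    exact hEinj i (by have := Finset.mem_range.mp hi; omega) j
      (by have := Finset.mem_range.mp hj; omega) hij
  set Q := P2 \ used with hQ
  have hQcard : Q.card = P2.card - 3 * t := by
    rw [hQ, Finset.card_sdiff_of_subset (husedP3.trans hP32), hused_card]
  have hEP3 : ∀ i, i < 3 * t → E i ∈ P3 := fun i hi => hmemE i (by omega)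
  have hEprime : ∀ i, i < 3 * t → (E i).Prime := fun i hi =>
    (Finset.mem_filter.mp (hEP3 i hi)).2.1
  have hEcube : ∀ i, i < 3 * t → (E i) ^ 3 ≤ N := fun i hi => hP3cube _ (hEP3 i hi)
  have hEne : ∀ i, i < 3 * t → ∀ i', i' < 3 * t → i ≠ i' → E i ≠ E i' := by
    intro i hi i' hi' hne h
    exact hne (hEinj i (by omega) i' (by omega) h)
  have hcopE : ∀ i, i < 3 * t → ∀ i', i' < 3 * t → i ≠ i' → Nat.Coprime (E i) (E i') :=
    fun i hi i' hi' hne => (Nat.coprime_primes (hEprime i hi) (hEprime i' hi')).mpr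
      (hEne i hi i' hi' hne)
  set T : ℕ → Finset ℕ := fun j => (Finset.univ : Finset (Fin 7)).image
    (fun i => (E (3 * j)) ^ (![0,0,0,0,1,1,3] : Fin 7 → ℕ) i
      * (E (3 * j + 1)) ^ (![0,0,1,3,0,1,0] : Fin 7 → ℕ) i
      * (E (3 * j + 2)) ^ (![1,2,2,0,2,0,0] : Fin 7 → ℕ) i) with hT
  have hTgood : ∀ j, j < t → DistinctSubsetProds ↑(T j) ∧ (T j).card = 7 := by
    intro j hj
    exact dsp_gadget (hEprime _ (by omega)) (hEprime _ (by omega)) (hEprime _ (by omega))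
      (hEne _ (by omega) _ (by omega) (by omega)) (hEne _ (by omega) _ (by omega) (by omega))
      (hEne _ (by omega) _ (by omega) (by omega)) _ _ _ key7
  have hT2 : ∀ j, j < t → ∀ x ∈ T j, 2 ≤ x := by
    intro j hj x hx
    obtain ⟨i, _, rfl⟩ := Finset.mem_image.mp hx
    exact two_le_ppow (hEprime _ (by omega)).two_le (hEprime _ (by omega)).two_le
      (hEprime _ (by omega)).two_le (gv_ne0 i)
  have hTleN : ∀ j, j < t → ∀ x ∈ T j, x ≤ N := by
    intro j hj x hx
    obtain ⟨i, _, rfl⟩ := Finset.mem_image.mp hx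
    exact elem_le (by omega) (hEcube _ (by omega)) (hEcube _ (by omega))
      (hEcube _ (by omega)) (gv_le3 i)
  have hTcop : ∀ j, j < t → ∀ y : ℕ, (Nat.Coprime (E (3 * j)) y) →
      (Nat.Coprime (E (3 * j + 1)) y) → (Nat.Coprime (E (3 * j + 2)) y) →
      ∀ x ∈ T j, Nat.Coprime x y := by
    intro j hj y h1 h2 h3 x hx
    obtain ⟨i, _, rfl⟩ := Finset.mem_image.mp hx
    exact cop_left3 h1 h2 h3 _ _ _
  -- part 1
  obtain ⟨hdsp1, hcard1⟩ := dsp_biUnion (P1 \ P2) (fun p => ({p} : Finset ℕ))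
    (by
      intro p hp a ha
      rw [Finset.mem_singleton] at ha
      rw [ha]
      exact (hprime1 p (Finset.mem_sdiff.mp hp).1).two_le)
    (by
      intro p hp q hq hne a ha b hb
      rw [Finset.mem_singleton] at ha hb
      rw [ha, hb]
      exact (Nat.coprime_primes (hprime1 p (Finset.mem_sdiff.mp hp).1)
        (hprime1 q (Finset.mem_sdiff.mp hq).1)).mpr hne)
    (fun p hp => dsp_single (hprime1 p (Finset.mem_sdiff.mp hp).1))
  -- part 2
  have hQP2 : Q ⊆ P2 := Finset.sdiff_subset
  have hQprime : ∀ p ∈ Q, p.Prime := fun p hp => hprime1 p (hP21 (hQP2 hp))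
  have hpair_form : ∀ p : ℕ, ∀ a ∈ ({p, p ^ 2} : Finset ℕ), ∃ e, 1 ≤ e ∧ e ≤ 2 ∧ a = p ^ e := by
    intro p a ha
    rcases Finset.mem_insert.mp ha with rfl | ha
    · exact ⟨1, le_refl 1, one_le_two, (pow_one a).symm⟩
    · rw [Finset.mem_singleton] at ha
      exact ⟨2, one_le_two, le_refl 2, ha⟩
  obtain ⟨hdsp2, hcard2⟩ := dsp_biUnion Q (fun p => ({p, p ^ 2} : Finset ℕ))
    (by
      intro p hp a ha
      obtain ⟨e, he1, _, rfl⟩ := hpair_form p a ha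
      calc 2 ≤ p := (hQprime p hp).two_le
        _ = p ^ 1 := (pow_one p).symm
        _ ≤ p ^ e := Nat.pow_le_pow_right (by have := (hQprime p hp).two_le; omega) he1)
    (by
      intro p hp q hq hne a ha b hb
      obtain ⟨e, _, _, rfl⟩ := hpair_form p a ha
      obtain ⟨f, _, _, rfl⟩ := hpair_form q b hb
      exact Nat.Coprime.pow _ _ ((Nat.coprime_primes (hQprime p hp) (hQprime q hq)).mpr hne))
    (fun p hp => dsp_pair (hQprime p hp))
  -- part 3
  obtain ⟨hdsp3, hcard3⟩ := dsp_biUnion (Finset.range t) T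
    (fun j hj => hT2 j (Finset.mem_range.mp hj))
    (by
      intro j hj j' hj' hne x hx y hy
      have hjt := Finset.mem_range.mp hj
      have hjt' := Finset.mem_range.mp hj'
      refine hTcop j hjt y ?_ ?_ ?_ x hx
      all_goals
        exact (hTcop j' hjt' _ (hcopE _ (by omega) _ (by omega) (by omega))
          (hcopE _ (by omega) _ (by omega) (by omega))
          (hcopE _ (by omega) _ (by omega) (by omega)) y hy).symm
      )
    (fun j hj => (hTgood j (Finset.mem_range.mp hj)).1)
  -- assemble
  set A1 := (P1 \ P2).biUnion (fun p => ({p} : Finset ℕ)) with hA1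
  set A2 := Q.biUnion (fun p => ({p, p ^ 2} : Finset ℕ)) with hA2
  set A3 := (Finset.range t).biUnion T with hA3
  have hA1elem : ∀ a ∈ A1, a ∈ P1 ∧ a ∉ P2 := by
    intro a ha
    obtain ⟨p, hp, hap⟩ := Finset.mem_biUnion.mp ha
    rw [Finset.mem_singleton] at hap
    rw [hap]
    exact ⟨(Finset.mem_sdiff.mp hp).1, (Finset.mem_sdiff.mp hp).2⟩
  have hA2elem : ∀ a ∈ A2, ∃ p, p ∈ P2 ∧ p ∉ used ∧ ∃ e, 1 ≤ e ∧ e ≤ 2 ∧ a = p ^ e := by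
    intro a ha
    obtain ⟨p, hp, hap⟩ := Finset.mem_biUnion.mp ha
    obtain ⟨e, he⟩ := hpair_form p a hap
    have hps := Finset.mem_sdiff.mp hp
    exact ⟨p, hps.1, hps.2, e, he⟩
  have hA3elem : ∀ a ∈ A3, ∃ j, j < t ∧ a ∈ T j := by
    intro a ha
    obtain ⟨j, hj, haj⟩ := Finset.mem_biUnion.mp ha
    exact ⟨j, Finset.mem_range.mp hj, haj⟩
  have h2A1 : ∀ a ∈ A1, 2 ≤ a := fun a ha => (hprime1 a (hA1elem a ha).1).two_le
  have h2A2 : ∀ a ∈ A2, 2 ≤ a := by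
    intro a ha
    obtain ⟨p, hpP2, _, e, he1, _, rfl⟩ := hA2elem a ha
    have hp' : p.Prime := hprime1 p (hP21 hpP2)
    calc 2 ≤ p := hp'.two_le
      _ = p ^ 1 := (pow_one p).symm
      _ ≤ p ^ e := Nat.pow_le_pow_right (by have := hp'.two_le; omega) he1
  have h2A3 : ∀ a ∈ A3, 2 ≤ a := by
    intro a ha
    obtain ⟨j, hj, haj⟩ := hA3elem a ha
    exact hT2 j hj a haj
  have hcop12 : ∀ a ∈ A1, ∀ b ∈ A2, Nat.Coprime a b := by
    intro a ha b hb
    obtain ⟨haP1, haP2⟩ := hA1elem a ha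
    obtain ⟨p, hpP2, _, e, _, _, rfl⟩ := hA2elem b hb
    have hne : a ≠ p := fun h => haP2 (h ▸ hpP2)
    exact ((Nat.coprime_primes (hprime1 a haP1) (hprime1 p (hP21 hpP2))).mpr hne).pow_right e
  have hcop13 : ∀ a ∈ A1, ∀ b ∈ A3, Nat.Coprime a b := by
    intro a ha b hb
    obtain ⟨haP1, haP2⟩ := hA1elem a ha
    obtain ⟨j, hj, hbj⟩ := hA3elem b hb
    have hgen : ∀ i, i < 3 * t → Nat.Coprime (E i) a := by
      intro i hi
      refine (Nat.coprime_primes (hEprime i hi) (hprime1 a haP1)).mpr ?_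
      intro h
      apply haP2
      have hmem := hP32 (hEP3 i hi)
      rwa [h] at hmem
    exact (hTcop j hj a (hgen _ (by omega)) (hgen _ (by omega)) (hgen _ (by omega)) b hbj).symm
  have hcop23 : ∀ a ∈ A2, ∀ b ∈ A3, Nat.Coprime a b := by
    intro a ha b hb
    obtain ⟨p, hpP2, hpused, e, _, _, rfl⟩ := hA2elem a ha
    obtain ⟨j, hj, hbj⟩ := hA3elem b hb
    have hgen : ∀ i, i < 3 * t → Nat.Coprime (E i) p := by
      intro i hi
      refine (Nat.coprime_primes (hEprime i hi) (hprime1 p (hP21 hpP2))).mpr ?_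
      intro h
      apply hpused
      have hmem := hmem_used i hi
      rwa [h] at hmem
    have hbase : Nat.Coprime p b :=
      (hTcop j hj p (hgen _ (by omega)) (hgen _ (by omega)) (hgen _ (by omega)) b hbj).symm
    exact hbase.pow_left e
  have hne0_1 : ∀ a ∈ A1, a ≠ 0 := fun a ha => by have := h2A1 a ha; omega
  have hne0_2 : ∀ a ∈ A2, a ≠ 0 := fun a ha => by have := h2A2 a ha; omega
  have hne0_3 : ∀ a ∈ A3, a ≠ 0 := fun a ha => by have := h2A3 a ha; omega
  have hdsp12 := dsp_union A1 A2 hne0_1 hne0_2 hcop12 hdsp1 hdsp2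
  have h2A12 : ∀ a ∈ A1 ∪ A2, 2 ≤ a := by
    intro a ha
    rcases Finset.mem_union.mp ha with h | h
    · exact h2A1 a h
    · exact h2A2 a h
  have hne0_12 : ∀ a ∈ A1 ∪ A2, a ≠ 0 := fun a ha => by have := h2A12 a ha; omega
  have hcop123 : ∀ a ∈ A1 ∪ A2, ∀ b ∈ A3, Nat.Coprime a b := by
    intro a ha b hb
    rcases Finset.mem_union.mp ha with h | h
    · exact hcop13 a h b hb
    · exact hcop23 a h b hb
  have hdspAll := dsp_union (A1 ∪ A2) A3 hne0_12 hne0_3 hcop123 hdsp12 hdsp3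
  have hd12 : Disjoint A1 A2 := disjoint_of_two_le_coprime _ _ h2A1 hcop12
  have hd123 : Disjoint (A1 ∪ A2) A3 := disjoint_of_two_le_coprime _ _ h2A12 hcop123
  have hcardU : (A1 ∪ A2 ∪ A3).card = A1.card + A2.card + A3.card := by
    rw [Finset.card_union_of_disjoint hd123, Finset.card_union_of_disjoint hd12]
  simp only [Finset.card_singleton, Finset.sum_const, smul_eq_mul, mul_one] at hcard1
  have hpaircard : ∀ p ∈ Q, ({p, p ^ 2} : Finset ℕ).card = 2 := by
    intro p hp
    have h2p := (hQprime p hp).two_le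
    apply Finset.card_pair
    have : p < p ^ 2 := by nlinarith
    omega
  rw [Finset.sum_congr rfl hpaircard, Finset.sum_const, smul_eq_mul] at hcard2
  rw [Finset.sum_congr rfl (fun j hj => (hTgood j (Finset.mem_range.mp hj)).2),
    Finset.sum_const, smul_eq_mul, Finset.card_range] at hcard3
  have hsub : ↑(A1 ∪ A2 ∪ A3) ⊆ Set.Icc 1 (N : ℕ) := by
    intro x hx
    simp only [Finset.coe_union, Set.mem_union, Finset.mem_coe] at hx
    rw [Set.mem_Icc]
    rcases hx with (hx | hx) | hx
    · refine ⟨by have := h2A1 x hx; omega, hP1le x (hA1elem x hx).1⟩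
    · have h2x := h2A2 x hx
      obtain ⟨p, hpP2, _, e, _, he2, rfl⟩ := hA2elem x hx
      refine ⟨by omega, ?_⟩
      calc p ^ e ≤ p ^ 2 := Nat.pow_le_pow_right
            (by have := (hprime1 p (hP21 hpP2)).two_le; omega) he2
        _ ≤ N := hP2sq p hpP2
    · obtain ⟨j, hj, hxj⟩ := hA3elem x hx
      exact ⟨by have := hT2 j hj x hxj; omega, hTleN j hj x hxj⟩
  have hle := le_maxDSP _ hsub hdspAll
  rw [hpi1, hpi2, hpi3]
  have hsd : (P1 \ P2).card = P1.card - P2.card := Finset.card_sdiff_of_subset hP21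
  have hk2 : k ≤ P2.card := Finset.card_le_card hP32
  have h21 : P2.card ≤ P1.card := Finset.card_le_card hP21
  omega

/-- `f(N) ≥ π(N) + π(N^{1/2}) + (1/3)·π(N^{1/3}) − C` for an absolute constant `C`. -/
theorem stmt2 : ∃ C : ℝ, 0 < C ∧ ∀ N : ℕ,
    (maxDSP N : ℝ) ≥ primePi N + primePi ((N : ℝ) ^ ((1 : ℝ) / 2)) +
      (1 / 3) * primePi ((N : ℝ) ^ ((1 : ℝ) / 3)) - C := by
  refine ⟨1, one_pos, fun N => ?_⟩
  by_cases hN : 2 ≤ N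
  · have h := main_bound N hN
    have hc : (primePi ((N : ℝ)) : ℝ) + (primePi ((N : ℝ) ^ ((1 : ℝ) / 2)) : ℝ) +
        ((primePi ((N : ℝ) ^ ((1 : ℝ) / 3)) / 3 : ℕ) : ℝ) ≤ (maxDSP N : ℝ) := by
      exact_mod_cast h
    have h3 : (primePi ((N : ℝ) ^ ((1 : ℝ) / 3)) : ℝ) ≤
        3 * ((primePi ((N : ℝ) ^ ((1 : ℝ) / 3)) / 3 : ℕ) : ℝ) + 2 := by
      have hh : primePi ((N : ℝ) ^ ((1 : ℝ) / 3)) ≤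
          3 * (primePi ((N : ℝ) ^ ((1 : ℝ) / 3)) / 3) + 2 := by omega
      exact_mod_cast hh
    rw [ge_iff_le]
    linarith
  · have hNle : (N : ℝ) ≤ 1 := by exact_mod_cast (by omega : N ≤ 1)
    have hr2 : (N : ℝ) ^ ((1 : ℝ) / 2) ≤ 1 :=
      Real.rpow_le_one (Nat.cast_nonneg N) hNle (by norm_num)
    have hr3 : (N : ℝ) ^ ((1 : ℝ) / 3) ≤ 1 :=
      Real.rpow_le_one (Nat.cast_nonneg N) hNle (by norm_num)
    have e1 : primePi (N : ℝ) = 0 := primePi_zero (by linarith)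
    have e2 : primePi ((N : ℝ) ^ ((1 : ℝ) / 2)) = 0 := primePi_zero (by linarith)
    have e3 : primePi ((N : ℝ) ^ ((1 : ℝ) / 3)) = 0 := primePi_zero (by linarith)
    rw [ge_iff_le, e1, e2, e3]
    have h0 : (0 : ℝ) ≤ (maxDSP N : ℝ) := Nat.cast_nonneg _
    push_cast
    linarith
end

section
/- For every ε > 0 there exists a constant C > 0 such that for all N ∈ ℕ, the number of distinct tuples (v_p(n))_{p prime, p ≤ N^{1/3}} arising from elements n of the subset product set Π([N]) = {∏_{t∈T} t : T ⊆ [N]} is at most exp(C·N^{1/3+ε}). Here v_p(n) denotes the p-adic valuation of n. -/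
/-- The number of distinct tuples of `p`-adic valuations at primes `p ≤ N^{1/3}` arising
from elements of the subset product set `Π([N]) = {∏_{t ∈ T} t : T ⊆ [N]}` is at most
`exp(C·N^{1/3+ε})`. -/
theorem stmt6 : ∀ ε : ℝ, 0 < ε → ∃ C : ℝ, 0 < C ∧ ∀ N : ℕ,
    (Set.ncard
      ((fun n : ℕ => fun p : {p : ℕ // p.Prime ∧ (p : ℝ) ≤ (N : ℝ) ^ ((1 : ℝ) / 3)} =>
          padicValNat p n) ''
        {m : ℕ | ∃ T : Finset ℕ, ↑T ⊆ Set.Icc 1 N ∧ ∏ t ∈ T, t = m}) : ℝ) ≤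
      Real.exp (C * (N : ℝ) ^ ((1 : ℝ) / 3 + ε)) := by
  intro ε hε
  refine ⟨2 * 2 ^ ε / ε + 1, by positivity, ?_⟩
  intro N
  set P := {p : ℕ // p.Prime ∧ (p : ℝ) ≤ (N : ℝ) ^ ((1 : ℝ) / 3)} with hPdef
  -- every prime in `P` is at most `N`
  have hple : ∀ p : P, (p : ℕ) ≤ N := by
    rintro ⟨p, hp, hpN⟩
    by_contra h
    push_neg at h
    have h1 : (N : ℝ) ^ ((1 : ℝ) / 3) ≤ (N : ℝ) := by
      rcases Nat.eq_zero_or_pos N with rfl | hN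
      · simp
      · calc (N : ℝ) ^ ((1 : ℝ) / 3) ≤ (N : ℝ) ^ (1 : ℝ) :=
              Real.rpow_le_rpow_of_exponent_le (by exact_mod_cast hN) (by norm_num)
        _ = N := Real.rpow_one _
    have : (p : ℝ) ≤ N := hpN.trans h1
    exact absurd (by exact_mod_cast this) (not_le.mpr h)
  have hfin : Finite P := by
    refine Finite.of_injective (fun p : P => (⟨(p : ℕ), Nat.lt_succ_of_le (hple p)⟩ : Fin (N + 1)))
      ?_
    intro a b hab
    exact Subtype.ext (by simpa using congrArg Fin.val hab)
  set A := ((fun n : ℕ => fun p : P => padicValNat p n) ''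
      {m : ℕ | ∃ T : Finset ℕ, ↑T ⊆ Set.Icc 1 N ∧ ∏ t ∈ T, t = m})
  -- every valuation arising from `A` is at most `N ^ 2`
  have hbound : ∀ f ∈ A, ∀ p : P, f p ≤ N ^ 2 := by
    rintro f ⟨m, ⟨T, hT, hprod⟩, rfl⟩ p
    have hTsub : T ⊆ Finset.Icc 1 N := by
      intro t ht
      have := hT ht
      simp only [Set.mem_Icc] at this
      exact Finset.mem_Icc.mpr this
    have hm1 : 1 ≤ m := by
      rw [← hprod]
      exact Finset.one_le_prod' fun t ht => (Finset.mem_Icc.mp (hTsub ht)).1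
    have hmle : m ≤ N ^ N := by
      rw [← hprod]
      calc ∏ t ∈ T, t ≤ ∏ _t ∈ T, N :=
            Finset.prod_le_prod' fun t ht => (Finset.mem_Icc.mp (hTsub ht)).2
        _ = N ^ T.card := Finset.prod_const N
        _ ≤ N ^ N := by
            rcases Nat.eq_zero_or_pos N with rfl | hN
            · have : T = ∅ := Finset.subset_empty.mp (by simpa using hTsub)
              subst this; simp
            · exact Nat.pow_le_pow_right hN (by simpa using Finset.card_le_card hTsub)
    set v := padicValNat p m with hv
    have hdvd : (p : ℕ) ^ v ∣ m := pow_padicValNat_dvd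
    have h2v : 2 ^ v ≤ m := by
      calc 2 ^ v ≤ (p : ℕ) ^ v := Nat.pow_le_pow_left p.2.1.two_le v
        _ ≤ m := Nat.le_of_dvd hm1 hdvd
    have hfinal : 2 ^ v ≤ 2 ^ (N ^ 2) := by
      calc 2 ^ v ≤ N ^ N := h2v.trans hmle
        _ ≤ (2 ^ N) ^ N := Nat.pow_le_pow_left (Nat.le_of_lt (Nat.lt_two_pow_self (n := N))) N
        _ = 2 ^ (N * N) := by rw [← pow_mul]
        _ = 2 ^ (N ^ 2) := by ring_nf
    exact (Nat.pow_le_pow_iff_right (le_refl 2)).mp hfinal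
  -- inject `A` into `P → Fin (N ^ 2 + 1)`
  have hcard : Nat.card A ≤ (N ^ 2 + 1) ^ Nat.card P := by
    have : Nat.card A ≤ Nat.card (P → Fin (N ^ 2 + 1)) := by
      refine Nat.card_le_card_of_injective
        (fun f : A => fun p : P => (⟨f.1 p, Nat.lt_succ_of_le (hbound f.1 f.2 p)⟩ :
          Fin (N ^ 2 + 1))) ?_
      intro a b hab
      refine Subtype.ext (funext fun p => ?_)
      simpa using congrArg Fin.val (congrFun hab p)
    simpa [Nat.card_fun] using this
  have hA : (A.ncard : ℝ) ≤ ((N ^ 2 + 1 : ℕ) : ℝ) ^ (Nat.card P) := by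
    rw [← Nat.card_coe_set_eq]
    exact_mod_cast hcard
  refine hA.trans ?_
  set k := Nat.card P with hk
  -- `k ≤ N ^ (1/3)`
  have hkle : (k : ℝ) ≤ (N : ℝ) ^ ((1 : ℝ) / 3) := by
    set B := ⌊(N : ℝ) ^ ((1 : ℝ) / 3)⌋₊ with hB
    have hpB : ∀ p : P, (p : ℕ) ≤ B := fun p =>
      Nat.le_floor (by exact_mod_cast p.2.2)
    have hkB : k ≤ B := by
      rw [hk]
      have : Nat.card P ≤ Nat.card (Fin B) := by
        refine Nat.card_le_card_of_injective
          (fun p : P => (⟨(p : ℕ) - 1, ?_⟩ : Fin B)) ?_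
        · have h2 : 2 ≤ (p : ℕ) := p.2.1.two_le
          have h3 := hpB p
          omega
        · intro a b hab
          have h2a : 2 ≤ (a : ℕ) := a.2.1.two_le
          have h2b : 2 ≤ (b : ℕ) := b.2.1.two_le
          have := congrArg Fin.val hab
          simp only at this
          exact Subtype.ext (by omega)
      simpa using this
    calc (k : ℝ) ≤ (B : ℝ) := by exact_mod_cast hkB
      _ ≤ (N : ℝ) ^ ((1 : ℝ) / 3) := Nat.floor_le (Real.rpow_nonneg (Nat.cast_nonneg N) _)
  -- convert to exponential form
  have hpos : (0 : ℝ) < ((N ^ 2 + 1 : ℕ) : ℝ) := by positivity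
  have hexp : ((N ^ 2 + 1 : ℕ) : ℝ) ^ k = Real.exp (k * Real.log ((N ^ 2 + 1 : ℕ) : ℝ)) := by
    rw [← Real.exp_log (pow_pos hpos k), Real.log_pow]
  rw [hexp]
  apply Real.exp_le_exp.mpr
  rcases Nat.eq_zero_or_pos N with rfl | hN
  · -- N = 0 : then there are no primes, k = 0
    have hk0 : k = 0 := by
      rw [hk]
      have : IsEmpty P := by
        constructor
        rintro ⟨p, hp, hpN⟩
        have : (p : ℝ) ≤ 0 := by simpa [Real.zero_rpow (by norm_num : (1 : ℝ) / 3 ≠ 0)] using hpN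
        have := hp.two_le
        have : (2 : ℝ) ≤ (p : ℝ) := by exact_mod_cast this
        linarith
      exact Nat.card_of_isEmpty
    rw [hk0]
    simp only [Nat.cast_zero, zero_mul]
    positivity
  · have hN1 : (1 : ℝ) ≤ (N : ℝ) := by exact_mod_cast hN
    have hlog : Real.log ((N ^ 2 + 1 : ℕ) : ℝ) ≤ 2 * (2 ^ ε / ε * (N : ℝ) ^ ε) := by
      have h1 : ((N ^ 2 + 1 : ℕ) : ℝ) ≤ (2 * N : ℝ) ^ 2 := by
        push_cast
        nlinarith
      have h2 : Real.log ((N ^ 2 + 1 : ℕ) : ℝ) ≤ 2 * Real.log (2 * N) := by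
        calc Real.log ((N ^ 2 + 1 : ℕ) : ℝ) ≤ Real.log ((2 * N : ℝ) ^ 2) :=
              Real.log_le_log hpos h1
          _ = 2 * Real.log (2 * N) := by
              rw [Real.log_pow]; push_cast; ring
      refine h2.trans ?_
      have h3 : Real.log (2 * (N : ℝ)) ≤ (2 * (N : ℝ)) ^ ε / ε :=
        Real.log_le_rpow_div (by positivity) hε
      have h4 : (2 * (N : ℝ)) ^ ε = 2 ^ ε * (N : ℝ) ^ ε :=
        Real.mul_rpow (by norm_num) (by positivity)
      have h5 : (2 * (N : ℝ)) ^ ε / ε = 2 ^ ε / ε * (N : ℝ) ^ ε := by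
        rw [h4]; ring
      rw [h5] at h3
      linarith
    have hknn : (0 : ℝ) ≤ (k : ℝ) := Nat.cast_nonneg k
    have hlognn : (0 : ℝ) ≤ Real.log ((N ^ 2 + 1 : ℕ) : ℝ) :=
      Real.log_nonneg (by push_cast; nlinarith)
    calc (k : ℝ) * Real.log ((N ^ 2 + 1 : ℕ) : ℝ)
        ≤ (N : ℝ) ^ ((1 : ℝ) / 3) * (2 * (2 ^ ε / ε * (N : ℝ) ^ ε)) := by
          apply mul_le_mul hkle hlog hlognn (Real.rpow_nonneg (Nat.cast_nonneg N) _)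
      _ = (2 * 2 ^ ε / ε) * ((N : ℝ) ^ ((1 : ℝ) / 3) * (N : ℝ) ^ ε) := by ring
      _ = (2 * 2 ^ ε / ε) * (N : ℝ) ^ ((1 : ℝ) / 3 + ε) := by
          rw [← Real.rpow_add (by exact_mod_cast hN)]
      _ ≤ (2 * 2 ^ ε / ε + 1) * (N : ℝ) ^ ((1 : ℝ) / 3 + ε) := by
          have : (0 : ℝ) ≤ (N : ℝ) ^ ((1 : ℝ) / 3 + ε) :=
            Real.rpow_nonneg (Nat.cast_nonneg N) _
          nlinarith
end

section
/- For every ε > 0 there exists a constant C > 0 such that for all N ∈ ℕ and all A ⊆ [N] with distinct subset products, the number of elements a ∈ A for which there exists a' ∈ A with a' ≠ a and v_p(a') = v_p(a) for every prime p with N^{1/3} < p ≤ N, is at most C·N^{1/3+ε}. -/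
open scoped Classical

noncomputable def Lp (y a : ℕ) : ℕ := ∏ p ∈ a.primeFactors.filter (fun p => y < p), p ^ a.factorization p
noncomputable def sp (y a : ℕ) : ℕ := ∏ p ∈ a.primeFactors.filter (fun p => ¬ y < p), p ^ a.factorization p

lemma Lp_mul_sp (y : ℕ) {a : ℕ} (ha : a ≠ 0) : Lp y a * sp y a = a := by
  rw [Lp, sp, Finset.prod_filter_mul_prod_filter_not]
  conv_rhs => rw [← Nat.factorization_prod_pow_eq_self ha]
  rw [Nat.prod_factorization_eq_prod_primeFactors]

lemma sp_pos (y a : ℕ) : 0 < sp y a := by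
  apply Finset.prod_pos
  intro p hp
  exact pow_pos (Nat.Prime.pos (Nat.prime_of_mem_primeFactors (Finset.mem_of_mem_filter _ hp))) _

lemma sp_ne_zero (y a : ℕ) : sp y a ≠ 0 := (sp_pos y a).ne'

lemma Lp_pos (y a : ℕ) : 0 < Lp y a := by
  apply Finset.prod_pos
  intro p hp
  exact pow_pos (Nat.Prime.pos (Nat.prime_of_mem_primeFactors (Finset.mem_of_mem_filter _ hp))) _

lemma factorization_sp (y a : ℕ) {q : ℕ} (hyq : y < q) : (sp y a).factorization q = 0 := by
  rw [sp, Nat.factorization_prod (fun p hp => pow_ne_zero _ (Nat.Prime.pos (Nat.prime_of_mem_primeFactors (Finset.mem_of_mem_filter _ hp))).ne')]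
  rw [Finsupp.finset_sum_apply]
  apply Finset.sum_eq_zero
  intro p hp
  rw [Finset.mem_filter] at hp
  rw [(Nat.prime_of_mem_primeFactors hp.1).factorization_pow, Finsupp.single_apply]
  have : p ≠ q := fun h => hp.2 (h ▸ hyq)
  simp [this]

lemma factorization_Lp_large (y : ℕ) {a : ℕ} (ha : a ≠ 0) {q : ℕ} (hyq : y < q) :
    (Lp y a).factorization q = a.factorization q := by
  conv_rhs => rw [← Lp_mul_sp y ha]
  rw [Nat.factorization_mul (Lp_pos y a).ne' (sp_ne_zero y a), Finsupp.add_apply,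
    factorization_sp y a hyq, add_zero]

lemma factorization_sp_le (y : ℕ) {a : ℕ} (ha : a ≠ 0) (q : ℕ) :
    (sp y a).factorization q ≤ a.factorization q := by
  conv_rhs => rw [← Lp_mul_sp y ha]
  rw [Nat.factorization_mul (Lp_pos y a).ne' (sp_ne_zero y a), Finsupp.add_apply]
  exact Nat.le_add_left _ _

lemma Lp_eq_iff (y : ℕ) {a a' : ℕ} (ha : a ≠ 0) (ha' : a' ≠ 0) :
    Lp y a' = Lp y a ↔ ∀ q : ℕ, q.Prime → y < q → a'.factorization q = a.factorization q := by
  constructor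
  · intro h q hq hyq
    rw [← factorization_Lp_large y ha' hyq, ← factorization_Lp_large y ha hyq, h]
  · intro h
    rw [Lp, Lp]
    have hset : a'.primeFactors.filter (fun p => y < p) = a.primeFactors.filter (fun p => y < p) := by
      ext q
      simp only [Finset.mem_filter, Nat.mem_primeFactors]
      constructor
      · rintro ⟨⟨hq, hdvd, _⟩, hyq⟩
        refine ⟨⟨hq, ?_, ha⟩, hyq⟩
        rw [hq.dvd_iff_one_le_factorization ha, ← h q hq hyq,
          ← hq.dvd_iff_one_le_factorization ha']
        exact hdvd
      · rintro ⟨⟨hq, hdvd, _⟩, hyq⟩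
        refine ⟨⟨hq, ?_, ha'⟩, hyq⟩
        rw [hq.dvd_iff_one_le_factorization ha', h q hq hyq,
          ← hq.dvd_iff_one_le_factorization ha]
        exact hdvd
    rw [hset]
    apply Finset.prod_congr rfl
    intro q hq
    rw [Finset.mem_filter] at hq
    rw [h q (Nat.prime_of_mem_primeFactors hq.1) hq.2]

lemma eq_prod_range (y : ℕ) {u : ℕ} (hu : u ≠ 0)
    (hsm : ∀ q : ℕ, q.Prime → y < q → u.factorization q = 0) :
    u = ∏ p ∈ Finset.range (y + 1), p ^ u.factorization p := by
  have hsub : u.primeFactors ⊆ Finset.range (y + 1) := by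
    intro q hq
    have hqp := Nat.prime_of_mem_primeFactors hq
    rw [Finset.mem_range, Nat.lt_succ_iff]
    by_contra hc
    have := hsm q hqp (Nat.lt_of_not_le hc)
    rw [← Nat.support_factorization, Finsupp.mem_support_iff] at hq
    exact hq this
  rw [← Finset.prod_subset hsub (fun p _ hp => by
    rw [← Nat.support_factorization, Finsupp.notMem_support_iff] at hp
    rw [hp, pow_zero])]
  rw [← Nat.prod_factorization_eq_prod_primeFactors, Nat.factorization_prod_pow_eq_self hu]

lemma pow5_le : ∀ n : ℕ, 2 ≤ n → (n + 1) ^ 5 ≤ 2 ^ (4 * n) := by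
  intro n hn
  induction n with
  | zero => omega
  | succ m ih =>
    rcases Nat.lt_or_ge m 2 with hm | hm
    · interval_cases m
      · omega
      · norm_num
    · have h1 := ih hm
      have h2 : 3 * (m + 2) ≤ 4 * (m + 1) := by omega
      have h3 : (3 * (m + 2)) ^ 5 ≤ (4 * (m + 1)) ^ 5 := Nat.pow_le_pow_left h2 5
      have h4 : 243 * (m + 2) ^ 5 ≤ 1024 * (m + 1) ^ 5 := by
        calc 243 * (m + 2) ^ 5 = (3 * (m + 2)) ^ 5 := by ring
        _ ≤ (4 * (m + 1)) ^ 5 := h3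
        _ = 1024 * (m + 1) ^ 5 := by ring
      have h5 : (m + 2) ^ 5 ≤ 16 * (m + 1) ^ 5 := by
        by_contra hc
        push_neg at hc
        have : 243 * (16 * (m + 1) ^ 5) < 243 * (m + 2) ^ 5 := by
          exact (Nat.mul_lt_mul_left (by norm_num : 0 < 243)).mpr hc
        omega
      calc (m + 1 + 1) ^ 5 ≤ 16 * (m + 1) ^ 5 := h5
      _ ≤ 16 * 2 ^ (4 * m) := by omega
      _ = 2 ^ (4 * (m + 1)) := by ring

lemma core (N y : ℕ) (hN : 2 ≤ N) (A : Finset ℕ)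
    (hA : ↑A ⊆ Set.Icc 1 N) (hD : DistinctSubsetProds ↑A) :
    (A.filter (fun a => ∃ a' ∈ A, a' ≠ a ∧ Lp y a' = Lp y a)).card
      ≤ 15 * (y + 1) * (Nat.log 2 N + 1) := by
  classical
  set T := A.filter (fun a => ∃ a' ∈ A, a' ≠ a ∧ Lp y a' = Lp y a) with hT
  set t := T.card with ht
  have hTA : T ⊆ A := Finset.filter_subset _ _
  have hmem : ∀ b ∈ A, 1 ≤ b ∧ b ≤ N := fun b hb => hA hb
  have hne : ∀ b ∈ A, b ≠ 0 := fun b hb => Nat.one_le_iff_ne_zero.mp (hmem b hb).1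
  set classes := T.image (Lp y) with hcl
  set E := t * N with hE
  -- t ≤ N
  have htN : t ≤ N := by
    have : T ⊆ Finset.Icc 1 N := by
      intro b hb
      rw [Finset.mem_Icc]
      exact hmem b (hTA hb)
    calc t ≤ (Finset.Icc 1 N).card := Finset.card_le_card this
    _ = N := by rw [Nat.card_Icc]; omega
  -- key product identity
  have key : ∀ B : Finset ℕ, B ⊆ T →
      ∏ b ∈ B, b = (∏ ℓ ∈ classes, ℓ ^ (B.filter (fun b => Lp y b = ℓ)).card)
        * ∏ p ∈ Finset.range (y + 1), p ^ ((∏ b ∈ B, sp y b).factorization p) := by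
    intro B hB
    have h1 : ∏ b ∈ B, b = (∏ b ∈ B, Lp y b) * ∏ b ∈ B, sp y b := by
      rw [← Finset.prod_mul_distrib]
      exact Finset.prod_congr rfl (fun b hb => (Lp_mul_sp y (hne b (hTA (hB hb)))).symm)
    have h2 : ∏ b ∈ B, Lp y b
        = ∏ ℓ ∈ classes, ℓ ^ (B.filter (fun b => Lp y b = ℓ)).card := by
      rw [← Finset.prod_fiberwise_of_maps_to
        (fun b hb => Finset.mem_image_of_mem (Lp y) (hB hb)) (Lp y)]
      refine Finset.prod_congr rfl (fun ℓ _ => ?_)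
      rw [Finset.prod_congr rfl (fun b hb => (Finset.mem_filter.mp hb).2), Finset.prod_const]
    have h3 : ∏ b ∈ B, sp y b
        = ∏ p ∈ Finset.range (y + 1), p ^ ((∏ b ∈ B, sp y b).factorization p) := by
      apply eq_prod_range
      · exact Finset.prod_ne_zero_iff.mpr (fun b _ => sp_ne_zero y b)
      · intro q hq hyq
        rw [Nat.factorization_prod (fun b _ => sp_ne_zero y b), Finsupp.finset_sum_apply]
        exact Finset.sum_eq_zero (fun b _ => factorization_sp y b hyq)
    rw [h1, h2, ← h3]
  -- the counting injection
  have hcard : 2 ^ t ≤ (∏ ℓ ∈ classes, ((T.filter (fun b => Lp y b = ℓ)).card + 1))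
      * (E + 1) ^ (y + 1) := by
    have hinj := Finset.card_le_card_of_injOn
      (s := T.powerset)
      (t := (classes.pi fun ℓ => Finset.range ((T.filter (fun b => Lp y b = ℓ)).card + 1)) ×ˢ
        ((Finset.range (y + 1)).pi fun _ => Finset.range (E + 1)))
      (fun B => ((fun ℓ _ => (B.filter (fun b => Lp y b = ℓ)).card),
        (fun p _ => ((∏ b ∈ B, sp y b).factorization p))))
      ?maps ?inj
    · rw [Finset.card_powerset, Finset.card_product, Finset.card_pi, Finset.card_pi] at hinj
      simp only [Finset.card_range, Finset.prod_const] at hinj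
      exact hinj
    case maps =>
      intro B hB
      rw [Finset.mem_coe, Finset.mem_powerset] at hB
      rw [Finset.mem_coe, Finset.mem_product]
      constructor
      · rw [Finset.mem_pi]
        intro ℓ hℓ
        rw [Finset.mem_range, Nat.lt_succ_iff]
        exact Finset.card_le_card (Finset.filter_subset_filter _ hB)
      · rw [Finset.mem_pi]
        intro p hp
        rw [Finset.mem_range, Nat.lt_succ_iff]
        show (∏ b ∈ B, sp y b).factorization p ≤ E
        rw [Nat.factorization_prod (fun b _ => sp_ne_zero y b), Finsupp.finset_sum_apply]
        calc ∑ b ∈ B, (sp y b).factorization p ≤ ∑ _b ∈ B, N := by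
              apply Finset.sum_le_sum
              intro b hb
              have hb0 := hne b (hTA (hB hb))
              calc (sp y b).factorization p ≤ b.factorization p := factorization_sp_le y hb0 p
              _ ≤ b := (Nat.factorization_lt p hb0).le
              _ ≤ N := (hmem b (hTA (hB hb))).2
        _ = B.card * N := by rw [Finset.sum_const, smul_eq_mul]
        _ ≤ t * N := Nat.mul_le_mul_right N (Finset.card_le_card hB)
    case inj =>
      intro B hB B' hB' heq
      simp only [Finset.mem_coe, Finset.mem_powerset] at hB hB'
      have h1 := congrArg Prod.fst heq
      have h2 := congrArg Prod.snd heq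
      simp only at h1 h2
      apply hD B B' (Finset.coe_subset.mpr (hB.trans hTA)) (Finset.coe_subset.mpr (hB'.trans hTA))
      rw [key B hB, key B' hB']
      congr 1
      · refine Finset.prod_congr rfl (fun ℓ hℓ => ?_)
        rw [congrFun (congrFun h1 ℓ) hℓ]
      · refine Finset.prod_congr rfl (fun p hp => ?_)
        rw [congrFun (congrFun h2 p) (by exact hp)]
  -- fibers have at least 2 elements
  have hfib2 : ∀ ℓ ∈ classes, 2 ≤ (T.filter (fun b => Lp y b = ℓ)).card := by
    intro ℓ hℓ
    rw [Finset.mem_image] at hℓ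
    obtain ⟨a, haT, hae⟩ := hℓ
    have haA : a ∈ A := hTA haT
    obtain ⟨-, a', ha'A, ha'ne, ha'L⟩ := Finset.mem_filter.mp haT
    have ha'T : a' ∈ T := by
      rw [hT, Finset.mem_filter]
      exact ⟨ha'A, a, haA, fun h => ha'ne h.symm, ha'L.symm⟩
    apply Finset.one_lt_card.mpr
    refine ⟨a, ?_, a', ?_, fun h => ha'ne h.symm⟩
    · exact Finset.mem_filter.mpr ⟨haT, hae⟩
    · exact Finset.mem_filter.mpr ⟨ha'T, by rw [ha'L, hae]⟩
  -- product of (fiber+1) bound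
  have hsum : t = ∑ ℓ ∈ classes, (T.filter (fun b => Lp y b = ℓ)).card :=
    Finset.card_eq_sum_card_fiberwise (fun b hb => Finset.mem_image_of_mem (Lp y) hb)
  have hP5 : (∏ ℓ ∈ classes, ((T.filter (fun b => Lp y b = ℓ)).card + 1)) ^ 5 ≤ 2 ^ (4 * t) := by
    rw [← Finset.prod_pow]
    calc ∏ ℓ ∈ classes, ((T.filter (fun b => Lp y b = ℓ)).card + 1) ^ 5
        ≤ ∏ ℓ ∈ classes, 2 ^ (4 * (T.filter (fun b => Lp y b = ℓ)).card) :=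
          Finset.prod_le_prod' (fun ℓ hℓ => pow5_le _ (hfib2 ℓ hℓ))
      _ = 2 ^ (∑ ℓ ∈ classes, 4 * (T.filter (fun b => Lp y b = ℓ)).card) :=
          Finset.prod_pow_eq_pow_sum _ _ _
      _ = 2 ^ (4 * t) := by rw [← Finset.mul_sum, ← hsum]
  -- combine
  have hQ : 2 ^ t ≤ (E + 1) ^ (5 * (y + 1)) := by
    have h5 : (2 ^ t) ^ 5 ≤ 2 ^ (4 * t) * ((E + 1) ^ (y + 1)) ^ 5 := by
      calc (2 ^ t) ^ 5 ≤ ((∏ ℓ ∈ classes, ((T.filter (fun b => Lp y b = ℓ)).card + 1))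
            * (E + 1) ^ (y + 1)) ^ 5 := Nat.pow_le_pow_left hcard 5
      _ = (∏ ℓ ∈ classes, ((T.filter (fun b => Lp y b = ℓ)).card + 1)) ^ 5
            * ((E + 1) ^ (y + 1)) ^ 5 := mul_pow _ _ _
      _ ≤ 2 ^ (4 * t) * ((E + 1) ^ (y + 1)) ^ 5 := Nat.mul_le_mul_right _ hP5
    have h6 : 2 ^ (4 * t) * 2 ^ t ≤ 2 ^ (4 * t) * ((E + 1) ^ (y + 1)) ^ 5 := by
      calc 2 ^ (4 * t) * 2 ^ t = (2 ^ t) ^ 5 := by rw [← pow_add, ← pow_mul]; ring_nf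
      _ ≤ _ := h5
    have h7 := Nat.le_of_mul_le_mul_left h6 (pow_pos (by norm_num) _)
    calc 2 ^ t ≤ ((E + 1) ^ (y + 1)) ^ 5 := h7
    _ = (E + 1) ^ (5 * (y + 1)) := by rw [← pow_mul]; ring_nf
  -- E + 1 ≤ N^3 < 2^(3l+3)
  set l := Nat.log 2 N with hl
  have hM : E + 1 ≤ 2 ^ (3 * l + 3) := by
    have h8 : E + 1 ≤ N ^ 3 := by
      have h8a : t * N ≤ N * N := Nat.mul_le_mul_right N htN
      calc E + 1 = t * N + 1 := by rw [hE]
      _ ≤ N * N + 1 := by omega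
      _ ≤ N ^ 3 := by nlinarith
    have h9 : N < 2 ^ (l + 1) := Nat.lt_pow_succ_log_self (by norm_num) N
    calc E + 1 ≤ N ^ 3 := h8
    _ ≤ (2 ^ (l + 1)) ^ 3 := Nat.pow_le_pow_left h9.le 3
    _ = 2 ^ (3 * l + 3) := by rw [← pow_mul]; ring_nf
  have hfinal : 2 ^ t ≤ 2 ^ ((3 * l + 3) * (5 * (y + 1))) := by
    calc 2 ^ t ≤ (E + 1) ^ (5 * (y + 1)) := hQ
    _ ≤ (2 ^ (3 * l + 3)) ^ (5 * (y + 1)) := Nat.pow_le_pow_left hM _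
    _ = _ := by rw [← pow_mul]
  have := (Nat.pow_le_pow_iff_right (by norm_num : 1 < 2)).mp hfinal
  calc t ≤ (3 * l + 3) * (5 * (y + 1)) := this
  _ = 15 * (y + 1) * (l + 1) := by ring

/-- For `A ⊆ [N]` with distinct subset products, the number of `a ∈ A` agreeing with some
other `a' ∈ A` in all valuations at primes in `(N^{1/3}, N]` is at most `C·N^{1/3+ε}`. -/
theorem stmt7 : ∀ ε : ℝ, 0 < ε → ∃ C : ℝ, 0 < C ∧ ∀ N : ℕ, ∀ A : Finset ℕ,
    ↑A ⊆ Set.Icc 1 N → DistinctSubsetProds ↑A →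
    ({a : ℕ | a ∈ A ∧ ∃ a' ∈ A, a' ≠ a ∧ ∀ p : ℕ, p.Prime →
        (N : ℝ) ^ ((1 : ℝ) / 3) < (p : ℝ) → p ≤ N →
        padicValNat p a' = padicValNat p a}.ncard : ℝ) ≤
      C * (N : ℝ) ^ ((1 : ℝ) / 3 + ε) := by
  intro ε hε
  refine ⟨60 * (1 / ε + 1), by positivity, ?_⟩
  intro N A hA hD
  set S := {a : ℕ | a ∈ A ∧ ∃ a' ∈ A, a' ≠ a ∧ ∀ p : ℕ, p.Prime →
        (N : ℝ) ^ ((1 : ℝ) / 3) < (p : ℝ) → p ≤ N →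
        padicValNat p a' = padicValNat p a} with hS
  have hmem : ∀ b ∈ A, 1 ≤ b ∧ b ≤ N := fun b hb => hA hb
  have hrpow_pos : 0 < (1 : ℝ) / 3 + ε := by linarith
  rcases Nat.lt_or_ge N 2 with hN2 | hN2
  · -- N = 0 or 1 : the set is empty
    have hSempty : S = ∅ := by
      rw [hS, Set.eq_empty_iff_forall_notMem]
      rintro a ⟨haA, a', ha'A, hne, -⟩
      have h1 := hmem a haA
      have h2 := hmem a' ha'A
      omega
    rw [hSempty]
    simp only [Set.ncard_empty, Nat.cast_zero]
    positivity
  · -- main case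
    set y := ⌊(N : ℝ) ^ ((1 : ℝ) / 3)⌋₊ with hy
    have hNR : (1 : ℝ) ≤ (N : ℝ) := by exact_mod_cast Nat.one_le_of_lt hN2
    -- the set equals the finset filter
    have hSeq : S = ↑(A.filter (fun a => ∃ a' ∈ A, a' ≠ a ∧ Lp y a' = Lp y a)) := by
      ext a
      simp only [hS, Set.mem_setOf_eq, Finset.coe_filter, Finset.mem_coe]
      constructor
      · rintro ⟨haA, a', ha'A, hne, hval⟩
        refine ⟨haA, a', ha'A, hne, ?_⟩
        have ha0 := hmem a haA
        have ha'0 := hmem a' ha'A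
        rw [Lp_eq_iff y (by omega : a ≠ 0) (by omega : a' ≠ 0)]
        intro q hq hyq
        have hq3 : (N : ℝ) ^ ((1 : ℝ) / 3) < q := (Nat.floor_lt (by positivity)).mp hyq
        rcases le_or_gt q N with hqN | hqN
        · rw [Nat.factorization_def _ hq, Nat.factorization_def _ hq]
          exact hval q hq hq3 hqN
        · rw [Nat.factorization_eq_zero_of_lt (by omega : a' < q),
            Nat.factorization_eq_zero_of_lt (by omega : a < q)]
      · rintro ⟨haA, a', ha'A, hne, hLp⟩
        refine ⟨haA, a', ha'A, hne, ?_⟩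
        intro p hp hp3 hpN
        have hval := (Lp_eq_iff y (by have := hmem a haA; omega : a ≠ 0)
          (by have := hmem a' ha'A; omega : a' ≠ 0)).mp hLp
        have hyp : y < p := (Nat.floor_lt (by positivity)).mpr hp3
        rw [← Nat.factorization_def _ hp, ← Nat.factorization_def _ hp]
        exact hval p hp hyp
    rw [hSeq, Set.ncard_coe_finset]
    have hcore := core N y hN2 A hA hD
    set l := Nat.log 2 N with hl
    have hNpos : (0 : ℝ) < (N : ℝ) := by linarith
    have h13 : (0 : ℝ) ≤ (N : ℝ) ^ ((1 : ℝ) / 3) := by positivity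
    have hyR : (y : ℝ) ≤ (N : ℝ) ^ ((1 : ℝ) / 3) := Nat.floor_le h13
    have h1le : (1 : ℝ) ≤ (N : ℝ) ^ ((1 : ℝ) / 3) := Real.one_le_rpow hNR (by norm_num)
    have hlR : (l : ℝ) ≤ 2 * Real.log N := by
      have h2l : ((2 : ℕ) ^ l : ℝ) ≤ (N : ℝ) := by
        exact_mod_cast Nat.pow_log_le_self 2 (by omega : N ≠ 0)
      have hlog := Real.log_le_log (by positivity) h2l
      rw [Real.log_pow] at hlog
      have hlog2 := Real.log_two_gt_d9
      have hl0 : (0 : ℝ) ≤ (l : ℝ) := Nat.cast_nonneg l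
      push_cast at hlog
      nlinarith
    have hcast : ((A.filter (fun a => ∃ a' ∈ A, a' ≠ a ∧ Lp y a' = Lp y a)).card : ℝ)
        ≤ 15 * ((y : ℝ) + 1) * ((l : ℝ) + 1) := by exact_mod_cast hcore
    have hstep1 : (15 : ℝ) * ((y : ℝ) + 1) * ((l : ℝ) + 1)
        ≤ 60 * (N : ℝ) ^ ((1 : ℝ) / 3) * (Real.log N + 1) := by
      have hy1 : (y : ℝ) + 1 ≤ 2 * (N : ℝ) ^ ((1 : ℝ) / 3) := by linarith
      have hl1 : (l : ℝ) + 1 ≤ 2 * (Real.log N + 1) := by linarith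
      have hmul := mul_le_mul hy1 hl1 (by positivity) (by positivity)
      nlinarith
    have hlog1 : Real.log N + 1 ≤ (1 / ε + 1) * (N : ℝ) ^ ε := by
      have hle := Real.log_le_rpow_div (le_of_lt hNpos) hε
      have h1eps : (1 : ℝ) ≤ (N : ℝ) ^ ε := Real.one_le_rpow hNR hε.le
      calc Real.log N + 1 ≤ (N : ℝ) ^ ε / ε + (N : ℝ) ^ ε := by linarith
      _ = (1 / ε + 1) * (N : ℝ) ^ ε := by ring
    calc ((A.filter (fun a => ∃ a' ∈ A, a' ≠ a ∧ Lp y a' = Lp y a)).card : ℝ)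
        ≤ 15 * ((y : ℝ) + 1) * ((l : ℝ) + 1) := hcast
    _ ≤ 60 * (N : ℝ) ^ ((1 : ℝ) / 3) * (Real.log N + 1) := hstep1
    _ ≤ 60 * (N : ℝ) ^ ((1 : ℝ) / 3) * ((1 / ε + 1) * (N : ℝ) ^ ε) :=
        mul_le_mul_of_nonneg_left hlog1 (by positivity)
    _ = 60 * (1 / ε + 1) * (N : ℝ) ^ ((1 : ℝ) / 3 + ε) := by
        rw [Real.rpow_add hNpos]; ring
end

section
/- For every ε > 0 there exists a constant C > 0 with the following property. Let N ∈ ℕ and let A ⊆ [N] have distinct subset products, such that the map a ↦ (v_p(a))_{p prime, N^{1/3} < p ≤ N} is injective on A and every a ∈ A is divisible by some prime in (N^{1/3}, N]. If C_1, …, C_n are the edge sets of pairwise edge-disjoint circuits in the prime factorization graph G(A), each of even length at most 2·N^{1/12}, then n ≤ C·N^{1/3+ε}. -/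
/-- `PLM N p` : `p` is a prime in `(N^{1/3}, N]` (a "large or medium" prime). -/
def PLM (N : ℕ) (p : ℕ) : Prop :=
  p.Prime ∧ (N : ℝ) ^ ((1 : ℝ) / 3) < (p : ℝ) ∧ p ≤ N

/-- The *prime factorization graph* of `A ⊆ [N]`: the vertices are the natural numbers
(only `1` and the primes in `(N^{1/3}, N]` can fail to be isolated); `1` is joined to a
prime `p ∈ (N^{1/3}, N]` if some `a ∈ A` has `v_p(a) = 1` and `v_q(a) = 0` for every
other prime `q ∈ (N^{1/3}, N]`; two distinct primes `p, q ∈ (N^{1/3}, N]` are joined if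
some `a ∈ A` is divisible by both. -/
def pfGraph (N : ℕ) (A : Finset ℕ) : SimpleGraph ℕ where
  Adj x y := x ≠ y ∧
    ((x = 1 ∧ PLM N y ∧ ∃ a ∈ A, padicValNat y a = 1 ∧
        ∀ q, PLM N q → q ≠ y → padicValNat q a = 0) ∨
     (y = 1 ∧ PLM N x ∧ ∃ a ∈ A, padicValNat x a = 1 ∧
        ∀ q, PLM N q → q ≠ x → padicValNat q a = 0) ∨
     (PLM N x ∧ PLM N y ∧ ∃ a ∈ A, x ∣ a ∧ y ∣ a))
  symm := by
    constructor
    intro x y ⟨hne, h⟩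
    refine ⟨hne.symm, ?_⟩
    rcases h with h | h | ⟨hx, hy, a, ha, hxa, hya⟩
    · exact Or.inr (Or.inl h)
    · exact Or.inl h
    · exact Or.inr (Or.inr ⟨hy, hx, a, ha, hya, hxa⟩)
  loopless := ⟨fun x h => h.1 rfl⟩

/-- The list of edges of the closed walk determined by the vertex list `l`. -/
def circuitEdgeList {V : Type*} (l : List V) : List (Sym2 V) :=
  (l.zip (l.rotate 1)).map fun p => s(p.1, p.2)

/-- `E` is the edge set of a circuit of length `k` in `G` : there are (not necessarily
distinct) vertices `v_1, …, v_k` such that the `k` edges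
`{v_1,v_2}, {v_2,v_3}, …, {v_k,v_1}` all lie in `G`, are pairwise distinct, and make up
`E`. -/
def IsCircuit {V : Type*} (G : SimpleGraph V) (k : ℕ) (E : Set (Sym2 V)) : Prop :=
  ∃ l : List V, l.length = k ∧ l ≠ [] ∧
    (∀ p ∈ l.zip (l.rotate 1), G.Adj p.1 p.2) ∧
    (circuitEdgeList l).Nodup ∧
    E = {e | e ∈ circuitEdgeList l}

/-- `E` is the edge set of a cycle of length `k` in `G` : as for a circuit, but the
vertices `v_1, …, v_k` are pairwise distinct. -/
def IsCycle {V : Type*} (G : SimpleGraph V) (k : ℕ) (E : Set (Sym2 V)) : Prop :=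
  ∃ l : List V, l.length = k ∧ l ≠ [] ∧ l.Nodup ∧
    (∀ p ∈ l.zip (l.rotate 1), G.Adj p.1 p.2) ∧
    (circuitEdgeList l).Nodup ∧
    E = {e | e ∈ circuitEdgeList l}

lemma cube_eq (N : ℕ) : ((N:ℝ) ^ ((1:ℝ)/3)) ^ (3:ℕ) = (N:ℝ) := by
  rw [← Real.rpow_natCast (((N:ℝ) ^ ((1:ℝ)/3))) 3, ← Real.rpow_mul (by positivity)]
  norm_num

lemma three_gt {N p q r : ℕ} (hp : PLM N p) (hq : PLM N q) (hr : PLM N r) :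
    (N:ℝ) < (p:ℝ) * q * r := by
  have h0 : (0:ℝ) ≤ (N:ℝ) ^ ((1:ℝ)/3) := by positivity
  calc (N:ℝ) = ((N:ℝ) ^ ((1:ℝ)/3)) ^ (3:ℕ) := (cube_eq N).symm
    _ < (p:ℝ) * q * r := by
        have h1 := hp.2.1; have h2 := hq.2.1; have h3 := hr.2.1
        have hq0 : (0:ℝ) ≤ (q:ℝ) := by positivity
        have hr0 : (0:ℝ) ≤ (r:ℝ) := by positivity
        calc ((N:ℝ) ^ ((1:ℝ)/3)) ^ (3:ℕ) = ((N:ℝ)^((1:ℝ)/3)) * ((N:ℝ)^((1:ℝ)/3)) * ((N:ℝ)^((1:ℝ)/3)) := by ring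
          _ < (p:ℝ) * q * r := by
              apply mul_lt_mul' (le_of_lt (mul_lt_mul' (le_of_lt h1) h2 h0 (lt_of_le_of_lt h0 h1))) h3 h0
              exact lt_of_le_of_lt (by positivity) (mul_lt_mul' (le_of_lt h1) h2 h0 (lt_of_le_of_lt h0 h1))

lemma no3 {N a p q r : ℕ} (ha1 : 1 ≤ a) (haN : a ≤ N) (hp : PLM N p) (hq : PLM N q)
    (hr : PLM N r) (hpq : p ≠ q) (hpr : p ≠ r) (hqr : q ≠ r)
    (dp : p ∣ a) (dq : q ∣ a) (dr : r ∣ a) : False := by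
  have cpq : Nat.Coprime p q := (Nat.coprime_primes hp.1 hq.1).mpr hpq
  have h1 : p * q ∣ a := cpq.mul_dvd_of_dvd_of_dvd dp dq
  have cpqr : Nat.Coprime (p*q) r :=
    Nat.Coprime.mul ((Nat.coprime_primes hp.1 hr.1).mpr hpr) ((Nat.coprime_primes hq.1 hr.1).mpr hqr)
  have h2 : p * q * r ∣ a := cpqr.mul_dvd_of_dvd_of_dvd h1 dr
  have h3 : p * q * r ≤ a := Nat.le_of_dvd ha1 h2
  have h4 : (N:ℝ) < (p:ℝ) * q * r := three_gt hp hq hr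
  have : ((p*q*r : ℕ):ℝ) ≤ (a:ℝ) := by exact_mod_cast h3
  push_cast at this
  have : (a:ℝ) ≤ (N:ℝ) := by exact_mod_cast haN
  linarith [show ((p:ℝ)*q*r) ≤ (a:ℝ) by exact_mod_cast h3]

lemma val_one_of_two {N a p q : ℕ} (ha1 : 1 ≤ a) (haN : a ≤ N) (hp : PLM N p) (hq : PLM N q)
    (hpq : p ≠ q) (dp : p ∣ a) (dq : q ∣ a) : a.factorization p = 1 := by
  have ha0 : a ≠ 0 := by omega
  have h1 : 1 ≤ a.factorization p := by
    rw [← hp.1.pow_dvd_iff_le_factorization ha0]; simpa using dp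
  by_contra h
  have h2 : 2 ≤ a.factorization p := by omega
  have hp2 : p ^ 2 ∣ a := by
    rw [hp.1.pow_dvd_iff_le_factorization ha0]; exact h2
  have cp : Nat.Coprime (p^2) q := Nat.Coprime.pow_left _ ((Nat.coprime_primes hp.1 hq.1).mpr hpq)
  have h3 : p^2 * q ∣ a := cp.mul_dvd_of_dvd_of_dvd hp2 dq
  have h4 : p^2 * q ≤ a := Nat.le_of_dvd ha1 h3
  have h5 : (N:ℝ) < (p:ℝ) * p * q := three_gt hp hp hq
  have h6 : ((p:ℝ)^2 * q) ≤ (a:ℝ) := by exact_mod_cast h4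
  have h7 : (a:ℝ) ≤ N := by exact_mod_cast haN
  nlinarith [h5, h6, h7]

def Wit (N : ℕ) (A : Finset ℕ) (x y a : ℕ) : Prop :=
  a ∈ A ∧ x ≠ y ∧
  ((x = 1 ∧ PLM N y ∧ padicValNat y a = 1 ∧
      ∀ q, PLM N q → q ≠ y → padicValNat q a = 0) ∨
   (y = 1 ∧ PLM N x ∧ padicValNat x a = 1 ∧
      ∀ q, PLM N q → q ≠ x → padicValNat q a = 0) ∨
   (PLM N x ∧ PLM N y ∧ x ∣ a ∧ y ∣ a))

lemma Wit.symm {N : ℕ} {A : Finset ℕ} {x y a : ℕ} (h : Wit N A x y a) : Wit N A y x a := by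
  obtain ⟨h1, h2, h3 | h3 | ⟨u, v, w, z⟩⟩ := h
  · exact ⟨h1, h2.symm, Or.inr (Or.inl h3)⟩
  · exact ⟨h1, h2.symm, Or.inl h3⟩
  · exact ⟨h1, h2.symm, Or.inr (Or.inr ⟨v, u, z, w⟩)⟩

lemma mem_bounds {N : ℕ} {A : Finset ℕ} (hA : ↑A ⊆ Set.Icc 1 N) {a : ℕ} (ha : a ∈ A) :
    1 ≤ a ∧ a ≤ N := hA ha

lemma val_wit {N : ℕ} {A : Finset ℕ} (hA : ↑A ⊆ Set.Icc 1 N) {x y a : ℕ}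
    (h : Wit N A x y a) {p : ℕ} (hp : PLM N p) :
    a.factorization p = (if x = p then 1 else 0) + (if y = p then 1 else 0) := by
  obtain ⟨hmem, hne, hcase⟩ := h
  obtain ⟨ha1, haN⟩ := mem_bounds hA hmem
  have ha0 : a ≠ 0 := by omega
  rcases hcase with ⟨hx1, hy, hv1, hv0⟩ | ⟨hy1, hx, hv1, hv0⟩ | ⟨hx, hy, dx, dy⟩
  · subst hx1
    have h1p : (1:ℕ) ≠ p := fun h => by simp [← h] at hp; exact Nat.not_prime_one hp.1
    rw [if_neg (Ne.symm (Ne.symm h1p))]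
    by_cases hyp : y = p
    · subst hyp
      rw [if_pos rfl, Nat.factorization_def a hp.1]
      omega
    · rw [if_neg hyp, Nat.factorization_def a hp.1, hv0 p hp (fun h => hyp h.symm)]
  · subst hy1
    have h1p : (1:ℕ) ≠ p := fun h => by simp [← h] at hp; exact Nat.not_prime_one hp.1
    rw [if_neg (Ne.symm (Ne.symm h1p))]
    by_cases hxp : x = p
    · subst hxp
      rw [if_pos rfl, Nat.factorization_def a hp.1]
      omega
    · rw [if_neg hxp, Nat.factorization_def a hp.1, hv0 p hp (fun h => hxp h.symm)]
  · by_cases hxp : x = p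
    · subst hxp
      rw [if_pos rfl, if_neg (Ne.symm hne)]
      exact val_one_of_two ha1 haN hx hy hne dx dy
    · rw [if_neg hxp]
      by_cases hyp : y = p
      · subst hyp
        rw [if_pos rfl]
        exact val_one_of_two ha1 haN hy hx (Ne.symm hne) dy dx
      · rw [if_neg hyp]
        by_contra hcon
        have h1 : 1 ≤ a.factorization p := by omega
        have dp : p ∣ a := by
          rw [← hp.1.pow_dvd_iff_le_factorization ha0] at h1; simpa using h1
        exact no3 ha1 haN hx hy hp hne (fun h => hxp h) (fun h => hyp h) dx dy dp

lemma wit_shape {N : ℕ} {A : Finset ℕ} {x y a : ℕ} (h : Wit N A x y a) :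
    (x = 1 ∧ PLM N y) ∨ (y = 1 ∧ PLM N x) ∨ (PLM N x ∧ PLM N y) := by
  rcases h.2.2 with ⟨u, v, _⟩ | ⟨u, v, _⟩ | ⟨u, v, _⟩
  · exact Or.inl ⟨u, v⟩
  · exact Or.inr (Or.inl ⟨u, v⟩)
  · exact Or.inr (Or.inr ⟨u, v⟩)

lemma one_ne_plm {N p : ℕ} (hp : PLM N p) : p ≠ 1 := hp.1.ne_one

lemma wit_unique_core {N : ℕ} {x y x' y' : ℕ}
    (hne : x ≠ y) (hne' : x' ≠ y')
    (hs : (x = 1 ∧ PLM N y) ∨ (PLM N x ∧ PLM N y))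
    (hs' : (x' = 1 ∧ PLM N y') ∨ (PLM N x' ∧ PLM N y'))
    (key : ∀ p, PLM N p →
      ((if x = p then 1 else 0) + (if y = p then 1 else 0) : ℕ) =
      (if x' = p then 1 else 0) + (if y' = p then 1 else 0)) :
    s(x, y) = s(x', y') := by
  rcases hs with ⟨hx1, hy⟩ | ⟨hx, hy⟩
  · rcases hs' with ⟨hx1', hy'⟩ | ⟨hx', hy'⟩
    · -- A-A
      subst hx1; subst hx1'
      have n1 : ¬((1:ℕ) = y') := fun h => (one_ne_plm hy') h.symm
      have hyy : y = y' := by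
        by_contra h1
        have k := key y' hy'
        simp [n1, h1] at k
      rw [hyy]
    · -- A-C : False
      exfalso
      subst hx1
      have e1 : y = x' := by
        by_contra h1
        have k1 := key x' hx'
        have n1 : ¬((1:ℕ) = x') := fun h => (one_ne_plm hx') h.symm
        have n2 : ¬(y' = x') := fun h => hne' h.symm
        simp [n1, n2, h1] at k1
      have e2 : y = y' := by
        by_contra h1
        have k2 := key y' hy'
        have n1 : ¬((1:ℕ) = y') := fun h => (one_ne_plm hy') h.symm
        simp [n1, hne', h1] at k2
      exact hne' (e1 ▸ e2 ▸ rfl)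
  · rcases hs' with ⟨hx1', hy'⟩ | ⟨hx', hy'⟩
    · -- C-A : False
      exfalso
      subst hx1'
      have e1 : y' = x := by
        by_contra h1
        have k1 := key x hx
        have n1 : ¬((1:ℕ) = x) := fun h => (one_ne_plm hx) h.symm
        have n2 : ¬(y = x) := fun h => hne h.symm
        simp [n1, n2, h1] at k1
      have e2 : y' = y := by
        by_contra h1
        have k2 := key y hy
        have n1 : ¬((1:ℕ) = y) := fun h => (one_ne_plm hy) h.symm
        simp [n1, hne, h1] at k2
      exact hne (e1 ▸ e2 ▸ rfl)
    · -- C-C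
      have nyx : ¬(y = x) := fun h => hne h.symm
      have hx'x : x' = x ∨ y' = x := by
        by_cases h1 : x' = x
        · exact Or.inl h1
        by_cases h2 : y' = x
        · exact Or.inr h2
        exfalso
        have k1 := key x hx
        simp [nyx, h1, h2] at k1
      have hx'y : x' = y ∨ y' = y := by
        by_cases h1 : x' = y
        · exact Or.inl h1
        by_cases h2 : y' = y
        · exact Or.inr h2
        exfalso
        have k2 := key y hy
        simp [hne, h1, h2] at k2
      rcases hx'x with h1 | h1
      · have h2 : y' = y := by
          rcases hx'y with h2 | h2
          · exact absurd (h1 ▸ h2 : x = y) hne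
          · exact h2
        rw [h1, h2]
      · have h2 : x' = y := by
          rcases hx'y with h2 | h2
          · exact h2
          · exact absurd (h1.symm.trans h2) hne
        rw [h2, h1]
        exact Sym2.eq_swap

lemma wit_norm {N : ℕ} {A : Finset ℕ} {x y a : ℕ} (h : Wit N A x y a) :
    ∃ u v, s(u, v) = s(x, y) ∧ Wit N A u v a ∧
      ((u = 1 ∧ PLM N v) ∨ (PLM N u ∧ PLM N v)) := by
  rcases wit_shape h with hs | hs | hs
  · exact ⟨x, y, rfl, h, Or.inl hs⟩
  · exact ⟨y, x, Sym2.eq_swap, h.symm, Or.inl hs⟩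
  · exact ⟨x, y, rfl, h, Or.inr hs⟩

lemma wit_unique {N : ℕ} {A : Finset ℕ} (hA : ↑A ⊆ Set.Icc 1 N) {x y x' y' a : ℕ}
    (h : Wit N A x y a) (h' : Wit N A x' y' a) : s(x, y) = s(x', y') := by
  obtain ⟨u, v, huv, hw, hsh⟩ := wit_norm h
  obtain ⟨u', v', huv', hw', hsh'⟩ := wit_norm h'
  rw [← huv, ← huv']
  refine wit_unique_core hw.2.1 hw'.2.1 hsh hsh' (fun p hp => ?_)
  rw [← val_wit hA hw hp, ← val_wit hA hw' hp]

lemma adj_wit {N : ℕ} {A : Finset ℕ} {x y : ℕ} (h : (pfGraph N A).Adj x y) :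
    ∃ a, Wit N A x y a := by
  obtain ⟨hne, hc⟩ : x ≠ y ∧ _ := h
  rcases hc with ⟨h1, h2, a, ha, h3⟩ | ⟨h1, h2, a, ha, h3⟩ | ⟨h1, h2, a, ha, h3⟩
  · exact ⟨a, ha, hne, Or.inl ⟨h1, h2, h3⟩⟩
  · exact ⟨a, ha, hne, Or.inr (Or.inl ⟨h1, h2, h3⟩)⟩
  · exact ⟨a, ha, hne, Or.inr (Or.inr ⟨h1, h2, h3⟩)⟩

def witS (N : ℕ) (A : Finset ℕ) (e : Sym2 ℕ) (a : ℕ) : Prop :=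
  ∃ x y, e = s(x, y) ∧ Wit N A x y a

lemma edge_wit {N : ℕ} {A : Finset ℕ} {e : Sym2 ℕ} (he : e ∈ (pfGraph N A).edgeSet) :
    ∃ a, witS N A e a := by
  induction e using Sym2.ind with
  | _ x y =>
    rw [SimpleGraph.mem_edgeSet] at he
    obtain ⟨a, ha⟩ := adj_wit he
    exact ⟨a, x, y, rfl, ha⟩

open Classical in
noncomputable def wfn (N : ℕ) (A : Finset ℕ) : Sym2 ℕ → ℕ := fun e =>
  if h : ∃ a, witS N A e a then h.choose else 0

lemma wfn_witS {N : ℕ} {A : Finset ℕ} {e : Sym2 ℕ} (he : e ∈ (pfGraph N A).edgeSet) :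
    witS N A e (wfn N A e) := by
  classical
  rw [wfn]
  simp only [dif_pos (edge_wit he)]
  exact (edge_wit he).choose_spec

lemma wfn_mem {N : ℕ} {A : Finset ℕ} {e : Sym2 ℕ} (he : e ∈ (pfGraph N A).edgeSet) :
    wfn N A e ∈ A := by
  obtain ⟨x, y, _, hw⟩ := wfn_witS he
  exact hw.1

lemma wfn_fact {N : ℕ} {A : Finset ℕ} (hA : ↑A ⊆ Set.Icc 1 N) {e : Sym2 ℕ}
    (he : e ∈ (pfGraph N A).edgeSet) {p : ℕ} (hp : PLM N p) :
    (wfn N A e).factorization p = if p ∈ e then 1 else 0 := by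
  obtain ⟨x, y, hexy, hw⟩ := wfn_witS he
  rw [val_wit hA hw hp]
  have hne := hw.2.1
  by_cases hm : p ∈ e
  · rw [if_pos hm]
    rw [hexy, Sym2.mem_iff] at hm
    rcases hm with h | h
    · rw [if_pos h.symm, if_neg (fun hh => hne (hh.trans h).symm)]
    · rw [if_neg (fun hh => hne (hh.trans h)), if_pos h.symm]
  · rw [if_neg hm]
    rw [hexy, Sym2.mem_iff] at hm
    push_neg at hm
    rw [if_neg (fun hh => hm.1 hh.symm), if_neg (fun hh => hm.2 hh.symm)]

lemma wfn_inj {N : ℕ} {A : Finset ℕ} (hA : ↑A ⊆ Set.Icc 1 N) {e e' : Sym2 ℕ}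
    (he : e ∈ (pfGraph N A).edgeSet) (he' : e' ∈ (pfGraph N A).edgeSet)
    (heq : wfn N A e = wfn N A e') : e = e' := by
  obtain ⟨x, y, hexy, hw⟩ := wfn_witS he
  obtain ⟨x', y', hexy', hw'⟩ := wfn_witS he'
  rw [heq] at hw
  rw [hexy, hexy']
  exact wit_unique hA hw hw'

lemma shift_parity {k j : ℕ} (hk : Even k) (hj : j < k) :
    ((j + 1) % k) % 2 = (j + 1) % 2 := by
  obtain ⟨m, hm⟩ := hk
  by_cases h : j + 1 = k
  · have h1 : (j + 1) % k = 0 := by rw [h, Nat.mod_self]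
    rw [h1]
    omega
  · have h1 : (j + 1) % k = j + 1 := Nat.mod_eq_of_lt (by omega)
    rw [h1]

lemma psi_parity {k j : ℕ} (hk : Even k) (hk0 : 0 < k) (hj : j < k) :
    ((j + (k - 1)) % k) % 2 = (j + 1) % 2 := by
  obtain ⟨m, hm⟩ := hk
  by_cases h : j = 0
  · subst h
    have h1 : (0 + (k - 1)) % k = k - 1 := by
      rw [Nat.zero_add]; exact Nat.mod_eq_of_lt (by omega)
    rw [h1]
    omega
  · have e : j + (k - 1) = (j - 1) + k := by omega
    have h1 : (j + (k - 1)) % k = j - 1 := by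
      rw [e, Nat.add_mod_right]; exact Nat.mod_eq_of_lt (by omega)
    rw [h1]
    omega

lemma shift_sum {M : Type*} [AddCommMonoid M] {k : ℕ} (hk : Even k) (hk0 : 0 < k)
    (f : ℕ → M) {r : ℕ} (hr : r < 2) :
    ∑ j ∈ (Finset.range k).filter (fun j => j % 2 = r), f ((j + 1) % k)
    = ∑ j ∈ (Finset.range k).filter (fun j => j % 2 = 1 - r), f j := by
  refine Finset.sum_nbij' (i := fun j => (j + 1) % k) (j := fun j => (j + (k - 1)) % k)
    ?_ ?_ ?_ ?_ ?_
  · intro a ha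
    simp only [Finset.mem_filter, Finset.mem_range] at ha ⊢
    refine ⟨Nat.mod_lt _ hk0, ?_⟩
    rw [shift_parity hk ha.1]
    omega
  · intro a ha
    simp only [Finset.mem_filter, Finset.mem_range] at ha ⊢
    refine ⟨Nat.mod_lt _ hk0, ?_⟩
    rw [psi_parity hk hk0 ha.1]
    omega
  · intro a ha
    simp only [Finset.mem_filter, Finset.mem_range] at ha
    show ((a + 1) % k + (k - 1)) % k = a
    rw [Nat.mod_add_mod]
    have e : a + 1 + (k - 1) = a + k := by omega
    rw [e, Nat.add_mod_right]
    exact Nat.mod_eq_of_lt ha.1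
  · intro a ha
    simp only [Finset.mem_filter, Finset.mem_range] at ha
    show ((a + (k - 1)) % k + 1) % k = a
    rw [Nat.mod_add_mod]
    have e : a + (k - 1) + 1 = a + k := by omega
    rw [e, Nat.add_mod_right]
    exact Nat.mod_eq_of_lt ha.1
  · intro a _
    rfl

lemma cel_length {V : Type*} (l : List V) : (circuitEdgeList l).length = l.length := by
  simp [circuitEdgeList]

noncomputable def Eg (l : List ℕ) (j : ℕ) : Sym2 ℕ :=
  (circuitEdgeList l).getD j s(0, 0)

lemma Eg_eq (l : List ℕ) {j : ℕ} (hj : j < l.length) :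
    Eg l j = s(l.getD j 0, l.getD ((j + 1) % l.length) 0) := by
  have h1 : j < (circuitEdgeList l).length := by rw [cel_length]; exact hj
  have h2 : j < (l.zip (l.rotate 1)).length := by simpa [circuitEdgeList] using hj
  rw [Eg, List.getD_eq_getElem _ _ h1]
  have hjr : j < (l.rotate 1).length := by simpa using hj
  simp only [circuitEdgeList]
  rw [List.getElem_map, List.getElem_zip, List.getElem_rotate,
    List.getD_eq_getElem _ _ hj, List.getD_eq_getElem _ _ (Nat.mod_lt _ (by omega))]

lemma Eg_mem_cel (l : List ℕ) {j : ℕ} (hj : j < l.length) : Eg l j ∈ circuitEdgeList l := by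
  have h1 : j < (circuitEdgeList l).length := by rw [cel_length]; exact hj
  rw [Eg, List.getD_eq_getElem _ _ h1]
  exact List.getElem_mem h1

lemma Eg_edge {N : ℕ} {A : Finset ℕ} {l : List ℕ}
    (hadj : ∀ p ∈ l.zip (l.rotate 1), (pfGraph N A).Adj p.1 p.2) {j : ℕ} (hj : j < l.length) :
    Eg l j ∈ (pfGraph N A).edgeSet := by
  have h2 : j < (l.zip (l.rotate 1)).length := by simp [hj]
  have hmem := List.getElem_mem h2
  have hadj' := hadj _ hmem
  have hjr : j < (l.rotate 1).length := by simpa using hj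
  rw [List.getElem_zip] at hadj'
  have : Eg l j = s(l[j], (l.rotate 1)[j]) := by
    rw [Eg_eq l hj, List.getElem_rotate, List.getD_eq_getElem _ _ hj,
      List.getD_eq_getElem _ _ (Nat.mod_lt _ (by omega))]
  rw [this, SimpleGraph.mem_edgeSet]
  exact hadj'

lemma Eg_inj {l : List ℕ} (hnd : (circuitEdgeList l).Nodup) {i j : ℕ}
    (hi : i < l.length) (hj : j < l.length) (h : Eg l i = Eg l j) : i = j := by
  have h1 : i < (circuitEdgeList l).length := by rw [cel_length]; exact hi
  have h2 : j < (circuitEdgeList l).length := by rw [cel_length]; exact hj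
  rw [Eg, Eg, List.getD_eq_getElem _ _ h1, List.getD_eq_getElem _ _ h2] at h
  exact (hnd.getElem_inj_iff).mp h

lemma ind_split {u v p : ℕ} (huv : u ≠ v) :
    (if p ∈ s(u, v) then (1:ℕ) else 0) = (if p = u then 1 else 0) + (if p = v then 1 else 0) := by
  by_cases h1 : p = u
  · by_cases h2 : p = v
    · exact absurd (h1.symm.trans h2) huv
    · simp [Sym2.mem_iff, h1, h2, huv]
  · by_cases h2 : p = v <;> simp [Sym2.mem_iff, h1, h2, (Ne.symm huv)]

noncomputable def wEg (N : ℕ) (A : Finset ℕ) (l : List ℕ) (j : ℕ) : ℕ := wfn N A (Eg l j)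

lemma adj_at {N : ℕ} {A : Finset ℕ} {l : List ℕ}
    (hadj : ∀ p ∈ l.zip (l.rotate 1), (pfGraph N A).Adj p.1 p.2) {j : ℕ} (hj : j < l.length) :
    (pfGraph N A).Adj (l.getD j 0) (l.getD ((j + 1) % l.length) 0) := by
  have h2 : j < (l.zip (l.rotate 1)).length := by simp [hj]
  have hadj' := hadj _ (List.getElem_mem h2)
  have hjr : j < (l.rotate 1).length := by simpa using hj
  rw [List.getElem_zip] at hadj'
  rw [List.getD_eq_getElem _ _ hj, List.getD_eq_getElem _ _ (Nat.mod_lt _ (by omega))]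
  have : (l.rotate 1)[j] = l[(j + 1) % l.length]'(Nat.mod_lt _ (by omega)) := by
    rw [List.getElem_rotate]
  rw [← this]
  exact hadj'

lemma wEg_fact {N : ℕ} {A : Finset ℕ} (hA : ↑A ⊆ Set.Icc 1 N) {l : List ℕ}
    (hadj : ∀ p ∈ l.zip (l.rotate 1), (pfGraph N A).Adj p.1 p.2) {j : ℕ} (hj : j < l.length)
    {p : ℕ} (hp : PLM N p) :
    (wEg N A l j).factorization p =
      (if p = l.getD j 0 then 1 else 0) + (if p = l.getD ((j + 1) % l.length) 0 then 1 else 0) := by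
  rw [wEg, wfn_fact hA (Eg_edge hadj hj) hp, Eg_eq l hj]
  exact ind_split (adj_at hadj hj).ne

lemma circuit_sum {N : ℕ} {A : Finset ℕ} (hA : ↑A ⊆ Set.Icc 1 N) {l : List ℕ}
    (hl : l ≠ []) (hkeven : Even l.length)
    (hadj : ∀ p ∈ l.zip (l.rotate 1), (pfGraph N A).Adj p.1 p.2)
    {p : ℕ} (hp : PLM N p) :
    ∑ j ∈ (Finset.range l.length).filter (fun j => j % 2 = 0), (wEg N A l j).factorization p
    = ∑ j ∈ (Finset.range l.length).filter (fun j => j % 2 = 1), (wEg N A l j).factorization p := by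
  have hk0 : 0 < l.length := List.length_pos_iff.mpr hl
  set F : ℕ → ℕ := fun j => if p = l.getD j 0 then 1 else 0 with hF
  have step : ∀ r : ℕ, r < 2 →
      ∑ j ∈ (Finset.range l.length).filter (fun j => j % 2 = r), (wEg N A l j).factorization p
      = (∑ j ∈ (Finset.range l.length).filter (fun j => j % 2 = r), F j)
        + ∑ j ∈ (Finset.range l.length).filter (fun j => j % 2 = 1 - r), F j := by
    intro r hr
    rw [← shift_sum hkeven hk0 F hr, ← Finset.sum_add_distrib]
    refine Finset.sum_congr rfl (fun j hj => ?_)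
    simp only [Finset.mem_filter, Finset.mem_range] at hj
    exact wEg_fact hA hadj hj.1 hp
  rw [step 0 (by omega), step 1 (by omega)]
  simp only [Nat.sub_zero, Nat.sub_self]
  exact Nat.add_comm _ _

noncomputable def idxSet (l : List ℕ) (r : ℕ) : Finset ℕ :=
  (Finset.range l.length).filter (fun j => j % 2 = r)

noncomputable def cSet (N : ℕ) (A : Finset ℕ) (l : List ℕ) (r : ℕ) : Finset ℕ :=
  (idxSet l r).image (wEg N A l)

lemma wEg_injOn {N : ℕ} {A : Finset ℕ} (hA : ↑A ⊆ Set.Icc 1 N) {l : List ℕ}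
    (hadj : ∀ p ∈ l.zip (l.rotate 1), (pfGraph N A).Adj p.1 p.2)
    (hnd : (circuitEdgeList l).Nodup) {i j : ℕ} (hi : i < l.length) (hj : j < l.length)
    (h : wEg N A l i = wEg N A l j) : i = j :=
  Eg_inj hnd hi hj (wfn_inj hA (Eg_edge hadj hi) (Eg_edge hadj hj) h)

lemma cSet_subset {N : ℕ} {A : Finset ℕ} {l : List ℕ}
    (hadj : ∀ p ∈ l.zip (l.rotate 1), (pfGraph N A).Adj p.1 p.2) (r : ℕ) :
    cSet N A l r ⊆ A := by
  intro a ha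
  rw [cSet, Finset.mem_image] at ha
  obtain ⟨j, hj, rfl⟩ := ha
  rw [idxSet, Finset.mem_filter, Finset.mem_range] at hj
  exact wfn_mem (Eg_edge hadj hj.1)

lemma cSet_prod {N : ℕ} {A : Finset ℕ} (hA : ↑A ⊆ Set.Icc 1 N) {l : List ℕ}
    (hadj : ∀ p ∈ l.zip (l.rotate 1), (pfGraph N A).Adj p.1 p.2)
    (hnd : (circuitEdgeList l).Nodup) (r : ℕ) :
    ∏ a ∈ cSet N A l r, a = ∏ j ∈ idxSet l r, wEg N A l j := by
  rw [cSet]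
  refine Finset.prod_image (fun i hi j hj h => ?_)
  rw [idxSet, Finset.mem_coe, Finset.mem_filter, Finset.mem_range] at hi hj
  exact wEg_injOn hA hadj hnd hi.1 hj.1 h

lemma cSet_prod_ne_zero {N : ℕ} {A : Finset ℕ} (hA : ↑A ⊆ Set.Icc 1 N) {l : List ℕ}
    (hadj : ∀ p ∈ l.zip (l.rotate 1), (pfGraph N A).Adj p.1 p.2) (r : ℕ) :
    ∏ a ∈ cSet N A l r, a ≠ 0 := by
  refine Finset.prod_ne_zero_iff.mpr (fun a ha => ?_)
  obtain ⟨u, v⟩ := mem_bounds hA (cSet_subset hadj r ha)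
  omega

lemma cSet_prod_fact {N : ℕ} {A : Finset ℕ} (hA : ↑A ⊆ Set.Icc 1 N) {l : List ℕ}
    (hadj : ∀ p ∈ l.zip (l.rotate 1), (pfGraph N A).Adj p.1 p.2)
    (hnd : (circuitEdgeList l).Nodup) (r : ℕ) (p : ℕ) :
    (∏ a ∈ cSet N A l r, a).factorization p = ∑ j ∈ idxSet l r, (wEg N A l j).factorization p := by
  rw [cSet_prod hA hadj hnd r, Nat.factorization_prod]
  · exact Finsupp.finset_sum_apply _ _ _
  · intro j hj
    rw [idxSet, Finset.mem_filter, Finset.mem_range] at hj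
    obtain ⟨u, v⟩ := mem_bounds hA (wfn_mem (Eg_edge hadj hj.1))
    show wfn N A (Eg l j) ≠ 0
    omega

lemma cSet_fact_eq {N : ℕ} {A : Finset ℕ} (hA : ↑A ⊆ Set.Icc 1 N) {l : List ℕ}
    (hl : l ≠ []) (hkeven : Even l.length)
    (hadj : ∀ p ∈ l.zip (l.rotate 1), (pfGraph N A).Adj p.1 p.2)
    (hnd : (circuitEdgeList l).Nodup) {p : ℕ} (hp : PLM N p) :
    (∏ a ∈ cSet N A l 0, a).factorization p = (∏ a ∈ cSet N A l 1, a).factorization p := by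
  rw [cSet_prod_fact hA hadj hnd 0 p, cSet_prod_fact hA hadj hnd 1 p]
  exact circuit_sum hA hl hkeven hadj hp

lemma cSet_nonempty {N : ℕ} {A : Finset ℕ} {l : List ℕ} (hl : l ≠ [])
    (hkeven : Even l.length) {r : ℕ} (hr : r < 2) : (cSet N A l r).Nonempty := by
  have hk0 : 0 < l.length := List.length_pos_iff.mpr hl
  have hk2 : 2 ≤ l.length := by
    obtain ⟨m, hm⟩ := hkeven; omega
  refine ⟨wEg N A l r, ?_⟩
  rw [cSet, Finset.mem_image]
  exact ⟨r, by rw [idxSet, Finset.mem_filter, Finset.mem_range]; omega, rfl⟩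

lemma cSet_mem_wfn {N : ℕ} {A : Finset ℕ} {l : List ℕ} {r : ℕ} {a : ℕ}
    (ha : a ∈ cSet N A l r) :
    ∃ j < l.length, j % 2 = r ∧ a = wEg N A l j := by
  rw [cSet, Finset.mem_image] at ha
  obtain ⟨j, hj, rfl⟩ := ha
  rw [idxSet, Finset.mem_filter, Finset.mem_range] at hj
  exact ⟨j, hj.1, hj.2, rfl⟩

lemma cSet_disj {N : ℕ} {A : Finset ℕ} (hA : ↑A ⊆ Set.Icc 1 N) {l : List ℕ}
    (hadj : ∀ p ∈ l.zip (l.rotate 1), (pfGraph N A).Adj p.1 p.2)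
    (hnd : (circuitEdgeList l).Nodup) :
    Disjoint (cSet N A l 0) (cSet N A l 1) := by
  rw [Finset.disjoint_left]
  intro a h0 h1
  obtain ⟨j0, hj0, hp0, he0⟩ := cSet_mem_wfn h0
  obtain ⟨j1, hj1, hp1, he1⟩ := cSet_mem_wfn h1
  have := wEg_injOn hA hadj hnd hj0 hj1 (he0 ▸ he1)
  omega


set_option maxHeartbeats 1000000 in
/-- If `C_1, …, C_n` are edge sets of pairwise edge-disjoint even circuits of length at
most `2·N^{1/12}` in the prime factorization graph of `A`, then `n ≤ C·N^{1/3+ε}`. -/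
theorem stmt9 : ∀ ε : ℝ, 0 < ε → ∃ C : ℝ, 0 < C ∧
    ∀ N : ℕ, ∀ A : Finset ℕ, ↑A ⊆ Set.Icc 1 N → DistinctSubsetProds ↑A →
    (∀ a ∈ A, ∀ b ∈ A, (∀ p : ℕ, PLM N p → padicValNat p a = padicValNat p b) → a = b) →
    (∀ a ∈ A, ∃ p : ℕ, PLM N p ∧ p ∣ a) →
    ∀ n : ℕ, ∀ Cs : Fin n → Set (Sym2 ℕ), ∀ k : Fin n → ℕ,
    (∀ i, IsCircuit (pfGraph N A) (k i) (Cs i)) →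
    (∀ i, Even (k i)) →
    (∀ i, (k i : ℝ) ≤ 2 * (N : ℝ) ^ ((1 : ℝ) / 12)) →
    (∀ i j, i ≠ j → Disjoint (Cs i) (Cs j)) →
    (n : ℝ) ≤ C * (N : ℝ) ^ ((1 : ℝ) / 3 + ε) := by
  intro ε hε
  refine ⟨7 / ε + 1, by positivity, ?_⟩
  intro N A hA hD _hinj _hdiv n Cs k hcirc heven _hklen hdisj
  classical
  by_cases hN2 : N < 2
  · -- no PLM primes, so no edges, so n = 0
    have hn0 : n = 0 := by
      by_contra hn
      have i : Fin n := ⟨0, Nat.pos_of_ne_zero hn⟩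
      obtain ⟨l, hlen, hlne, hladj, hlnd, hlset⟩ := hcirc i
      have hk0 : 0 < l.length := List.length_pos_iff.mpr hlne
      have hadj := adj_at hladj hk0
      obtain ⟨a, hw⟩ := adj_wit hadj
      rcases wit_shape hw with ⟨_, hp⟩ | ⟨_, hp⟩ | ⟨hp, _⟩ <;>
        exact absurd (le_trans hp.1.two_le hp.2.2) (by omega)
    rw [hn0]
    push_cast
    positivity
  push_neg at hN2
  have hN0 : (0:ℝ) < (N:ℝ) := by positivity
  have hN1R : (1:ℝ) ≤ (N:ℝ) := by exact_mod_cast (by omega : 1 ≤ N)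
  -- choose circuit lists
  choose L hLlen hLne hLadj hLnd hLset using hcirc
  have heven' : ∀ i, Even (L i).length := fun i => (hLlen i).symm ▸ heven i
  -- products
  set P : Fin n → ℕ → ℕ := fun i r => ∏ a ∈ cSet N A (L i) r, a with hP
  -- master disjointness
  have master : ∀ i j r s a, r < 2 → s < 2 → a ∈ cSet N A (L i) r → a ∈ cSet N A (L j) s →
      i = j ∧ r = s := by
    intro i j r s a hr hs hai haj
    obtain ⟨j0, hj0, hp0, he0⟩ := cSet_mem_wfn hai
    obtain ⟨j1, hj1, hp1, he1⟩ := cSet_mem_wfn haj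
    have hedge0 := Eg_edge (hLadj i) hj0
    have hedge1 := Eg_edge (hLadj j) hj1
    have heeq : Eg (L i) j0 = Eg (L j) j1 := by
      refine wfn_inj hA hedge0 hedge1 ?_
      rw [show wfn N A (Eg (L i) j0) = wEg N A (L i) j0 from rfl,
        show wfn N A (Eg (L j) j1) = wEg N A (L j) j1 from rfl, ← he0, ← he1]
    have hij : i = j := by
      by_contra hij
      have h0 : Eg (L i) j0 ∈ Cs i := by
        rw [hLset i]; exact Eg_mem_cel _ hj0
      have h1 : Eg (L i) j0 ∈ Cs j := by
        rw [hLset j, heeq]; exact Eg_mem_cel _ hj1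
      exact Set.disjoint_left.mp (hdisj i j hij) h0 h1
    subst hij
    have := Eg_inj (hLnd i) hj0 hj1 heeq
    omega
  -- valuations of P i r agree for PLM primes
  have hPQfact : ∀ i p, PLM N p → (P i 0).factorization p = (P i 1).factorization p :=
    fun i p hp => cSet_fact_eq hA (hLne i) (heven' i) (hLadj i) (hLnd i) hp
  have hPne0 : ∀ i r, P i r ≠ 0 := fun i r => cSet_prod_ne_zero hA (hLadj i) r
  -- the subset-product map
  set xP : Finset (Fin n) → ℕ := fun S => ∏ i, if i ∈ S then P i 0 else P i 1 with hxP
  set U : Finset (Fin n) → Finset ℕ :=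
    fun S => Finset.univ.biUnion (fun i => if i ∈ S then cSet N A (L i) 0 else cSet N A (L i) 1)
    with hU
  have hUmem : ∀ S a, a ∈ U S ↔ ∃ i, a ∈ (if i ∈ S then cSet N A (L i) 0 else cSet N A (L i) 1) := by
    intro S a
    rw [hU]
    simp [Finset.mem_biUnion]
  have hxU : ∀ S, xP S = ∏ a ∈ U S, a := by
    intro S
    rw [hU]
    rw [Finset.prod_biUnion]
    · exact Finset.prod_congr rfl (fun i _ => by split_ifs <;> rfl)
    · intro i _ j _ hij
      refine Finset.disjoint_left.mpr (fun a hai haj => ?_)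
      beta_reduce at hai haj
      by_cases hiS : i ∈ S
      · rw [if_pos hiS] at hai
        by_cases hjS : j ∈ S
        · rw [if_pos hjS] at haj
          exact hij (master i j 0 0 a (by omega) (by omega) hai haj).1
        · rw [if_neg hjS] at haj
          exact hij (master i j 0 1 a (by omega) (by omega) hai haj).1
      · rw [if_neg hiS] at hai
        by_cases hjS : j ∈ S
        · rw [if_pos hjS] at haj
          exact hij (master i j 1 0 a (by omega) (by omega) hai haj).1
        · rw [if_neg hjS] at haj
          exact hij (master i j 1 1 a (by omega) (by omega) hai haj).1
  have hUA : ∀ S, (U S) ⊆ A := by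
    intro S a ha
    rw [hUmem] at ha
    obtain ⟨i, hi⟩ := ha
    split_ifs at hi <;> exact cSet_subset (hLadj i) _ hi
  have hUinj : ∀ S T, U S = U T → S = T := by
    have key : ∀ S T, U S = U T → S ⊆ T := by
      intro S T hST i hiS
      obtain ⟨b, hbB⟩ := cSet_nonempty (N := N) (A := A) (hLne i) (heven' i)
        (show (0:ℕ) < 2 by omega)
      have hb : b ∈ U S := by
        rw [hUmem]
        exact ⟨i, by rw [if_pos hiS]; exact hbB⟩
      rw [hST, hUmem] at hb
      obtain ⟨i', hbi'⟩ := hb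
      by_cases hi' : i' ∈ T
      · rw [if_pos hi'] at hbi'
        have := master i i' 0 0 b (by omega) (by omega) hbB hbi'
        rw [this.1]; exact hi'
      · rw [if_neg hi'] at hbi'
        have := master i i' 0 1 b (by omega) (by omega) hbB hbi'
        omega
    exact fun S T h => subset_antisymm (key S T h) (key T S h.symm)
  have hxinj : ∀ S T, xP S = xP T → S = T := by
    intro S T h
    refine hUinj S T (hD (U S) (U T) ?_ ?_ ?_)
    · exact Finset.coe_subset.mpr (hUA S)
    · exact Finset.coe_subset.mpr (hUA T)
    · rw [← hxU, ← hxU, h]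
  have hx0 : ∀ S, xP S ≠ 0 := by
    intro S
    rw [hxP]
    refine Finset.prod_ne_zero_iff.mpr (fun i _ => ?_)
    split_ifs <;> exact hPne0 i _
  have hxle : ∀ S, xP S ≤ N ^ N := by
    intro S
    rw [hxU]
    have hcard : (U S).card ≤ N := by
      have h1 : A ⊆ Finset.Icc 1 N := by
        intro a ha
        have := hA ha
        rw [Finset.mem_Icc]
        exact ⟨this.1, this.2⟩
      calc (U S).card ≤ A.card := Finset.card_le_card (hUA S)
        _ ≤ (Finset.Icc 1 N).card := Finset.card_le_card h1
        _ = N := by rw [Nat.card_Icc]; omega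
    calc ∏ a ∈ U S, a ≤ ∏ _a ∈ U S, N :=
          Finset.prod_le_prod' (fun a ha => (hA (hUA S ha)).2)
      _ = N ^ (U S).card := Finset.prod_const N
      _ ≤ N ^ N := Nat.pow_le_pow_right (by omega) hcard
  have hvalbound : ∀ S p, p.Prime → (xP S).factorization p ≤ N * N := by
    intro S p hp
    have h1 : p ^ (xP S).factorization p ≤ xP S :=
      Nat.le_of_dvd (Nat.pos_of_ne_zero (hx0 S)) (Nat.ordProj_dvd _ _)
    have h2 : 2 ^ (xP S).factorization p ≤ p ^ (xP S).factorization p :=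
      Nat.pow_le_pow_left hp.two_le _
    have h3 : N ^ N ≤ 2 ^ (N * N) := by
      calc N ^ N ≤ (2 ^ N) ^ N := Nat.pow_le_pow_left (Nat.lt_two_pow_self (n := N)).le _
        _ = 2 ^ (N * N) := by rw [← pow_mul]
    have h4 : 2 ^ (xP S).factorization p ≤ 2 ^ (N * N) :=
      le_trans h2 (le_trans h1 (le_trans (hxle S) h3))
    exact (Nat.pow_le_pow_iff_right (by omega)).mp h4
  have hcommon : ∀ S p, PLM N p →
      (xP S).factorization p = ∑ i, (P i 0).factorization p := by
    intro S p hp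
    rw [hxP]
    rw [Nat.factorization_prod (fun i _ => by split_ifs <;> exact hPne0 i _)]
    rw [Finsupp.finset_sum_apply]
    refine Finset.sum_congr rfl (fun i _ => ?_)
    split_ifs
    · rfl
    · exact (hPQfact i p hp).symm
  have hlarge : ∀ S p, N < p → (xP S).factorization p = 0 := by
    intro S p hpN
    rw [hxU]
    rw [Nat.factorization_prod (fun a ha => by
      obtain ⟨u, v⟩ := hA (hUA S ha); omega)]
    rw [Finsupp.finset_sum_apply]
    refine Finset.sum_eq_zero (fun a ha => ?_)
    exact Nat.factorization_eq_zero_of_lt (by obtain ⟨u, v⟩ := hA (hUA S ha); omega)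
  -- small primes
  set SmallP : Finset ℕ :=
    (Finset.range (N+1)).filter (fun p => Nat.Prime p ∧ (p:ℝ) ≤ (N:ℝ) ^ ((1:ℝ)/3))
    with hSmallP
  have hSmem : ∀ q : ℕ, q ∈ SmallP ↔
      q < N + 1 ∧ (Nat.Prime q ∧ (q:ℝ) ≤ (N:ℝ) ^ ((1:ℝ)/3)) := by
    intro q
    rw [hSmallP, Finset.mem_filter, Finset.mem_range]
  have hsplit : ∀ p : ℕ, p.Prime → p ∈ SmallP ∨ PLM N p ∨ N < p := by
    intro p hp
    by_cases hpN : p ≤ N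
    · by_cases hple : (p:ℝ) ≤ (N:ℝ) ^ ((1:ℝ)/3)
      · left
        exact (hSmem p).mpr ⟨by omega, hp, hple⟩
      · right; left
        exact ⟨hp, lt_of_not_ge hple, hpN⟩
    · right; right; omega
  set Φ : Finset (Fin n) → (↥SmallP → Fin (N * N + 1)) :=
    fun S p => ⟨(xP S).factorization p.1, Nat.lt_succ_of_le (hvalbound S p.1
      ((hSmem p.1).mp p.2).2.1)⟩ with hΦ
  have hΦinj : Function.Injective Φ := by
    intro S T h
    refine hxinj S T (Nat.factorization_inj (hx0 S) (hx0 T) ?_)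
    ext p
    by_cases hp : p.Prime
    · rcases hsplit p hp with hm | hm | hm
      · have := congrFun h ⟨p, hm⟩
        rw [hΦ] at this
        simpa [Fin.ext_iff] using this
      · rw [hcommon S p hm, hcommon T p hm]
      · rw [hlarge S p hm, hlarge T p hm]
    · rw [Nat.factorization_eq_zero_of_not_prime _ hp,
        Nat.factorization_eq_zero_of_not_prime _ hp]
  have hcard : 2 ^ n ≤ (N * N + 1) ^ SmallP.card := by
    calc 2 ^ n = Fintype.card (Finset (Fin n)) := by simp [Fintype.card_finset]
      _ ≤ Fintype.card (↥SmallP → Fin (N * N + 1)) := Fintype.card_le_of_injective Φ hΦinj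
      _ = (N * N + 1) ^ SmallP.card := by
          rw [Fintype.card_fun]
          simp [Fintype.card_coe]
  -- bound on number of small primes
  have hR : (SmallP.card : ℝ) ≤ (N:ℝ) ^ ((1:ℝ)/3) := by
    set M := ⌊(N:ℝ) ^ ((1:ℝ)/3)⌋₊ with hM
    have hsub : SmallP ⊆ Finset.Icc 2 M := by
      intro p hp
      rw [hSmem] at hp
      rw [Finset.mem_Icc]
      exact ⟨hp.2.1.two_le, Nat.le_floor hp.2.2⟩
    have h1 : SmallP.card ≤ M := by
      calc SmallP.card ≤ (Finset.Icc 2 M).card := Finset.card_le_card hsub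
        _ = M + 1 - 2 := Nat.card_Icc 2 M
        _ ≤ M := by omega
    calc (SmallP.card : ℝ) ≤ (M : ℝ) := by exact_mod_cast h1
      _ ≤ (N:ℝ) ^ ((1:ℝ)/3) := Nat.floor_le (by positivity)
  -- real arithmetic
  have hlogs : (n:ℝ) * Real.log 2 ≤ (SmallP.card : ℝ) * Real.log ((N:ℝ) * N + 1) := by
    have hc : ((2:ℝ)) ^ n ≤ ((N:ℝ) * N + 1) ^ SmallP.card := by
      have := hcard
      calc ((2:ℝ)) ^ n = (((2:ℕ) ^ n : ℕ) : ℝ) := by push_cast; ring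
        _ ≤ (((N * N + 1 : ℕ) ^ SmallP.card : ℕ) : ℝ) := by exact_mod_cast this
        _ = ((N:ℝ) * N + 1) ^ SmallP.card := by push_cast; ring
    have hlog := Real.log_le_log (by positivity) hc
    rw [Real.log_pow, Real.log_pow] at hlog
    exact hlog
  have hlogN3 : Real.log ((N:ℝ) * N + 1) ≤ 3 * Real.log N := by
    have h1 : (N:ℝ) * N + 1 ≤ (N:ℝ) ^ (3:ℕ) := by
      have : (2:ℝ) ≤ (N:ℝ) := by exact_mod_cast hN2
      nlinarith
    calc Real.log ((N:ℝ) * N + 1) ≤ Real.log ((N:ℝ) ^ (3:ℕ)) :=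
          Real.log_le_log (by positivity) h1
      _ = 3 * Real.log N := by rw [Real.log_pow]; norm_num
  have hlogNnn : 0 ≤ Real.log N := Real.log_nonneg hN1R
  have hmain : (n:ℝ) * Real.log 2 ≤ (N:ℝ) ^ ((1:ℝ)/3) * (3 * Real.log N) := by
    calc (n:ℝ) * Real.log 2 ≤ (SmallP.card : ℝ) * Real.log ((N:ℝ) * N + 1) := hlogs
      _ ≤ (SmallP.card : ℝ) * (3 * Real.log N) :=
          mul_le_mul_of_nonneg_left hlogN3 (Nat.cast_nonneg _)
      _ ≤ (N:ℝ) ^ ((1:ℝ)/3) * (3 * Real.log N) :=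
          mul_le_mul_of_nonneg_right hR (by linarith [hlogNnn])
  have hn6 : (n:ℝ) ≤ 6 * ((N:ℝ) ^ ((1:ℝ)/3) * Real.log N) := by
    have hl2 : (1:ℝ)/2 ≤ Real.log 2 := by linarith [Real.log_two_gt_d9]
    have hn0 : (0:ℝ) ≤ (n:ℝ) := by positivity
    nlinarith [hmain, mul_le_mul_of_nonneg_left hl2 hn0]
  have hlogle : Real.log N * ε ≤ (N:ℝ) ^ ε := by
    have h1 : Real.log ((N:ℝ) ^ ε) = ε * Real.log N := Real.log_rpow hN0 ε
    have h2 : Real.log ((N:ℝ) ^ ε) ≤ (N:ℝ) ^ ε - 1 :=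
      Real.log_le_sub_one_of_pos (by positivity)
    nlinarith
  have hrpow : (N:ℝ) ^ ((1:ℝ)/3 + ε) = (N:ℝ) ^ ((1:ℝ)/3) * (N:ℝ) ^ ε :=
    Real.rpow_add hN0 _ _
  calc (n:ℝ) ≤ 6 * ((N:ℝ) ^ ((1:ℝ)/3) * Real.log N) := hn6
    _ ≤ 6 * ((N:ℝ) ^ ((1:ℝ)/3) * ((N:ℝ) ^ ε / ε)) := by
        refine mul_le_mul_of_nonneg_left ?_ (by norm_num)
        refine mul_le_mul_of_nonneg_left ?_ (by positivity)
        rw [le_div_iff₀ hε]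
        exact hlogle
    _ = (6/ε) * ((N:ℝ) ^ ((1:ℝ)/3) * (N:ℝ) ^ ε) := by
        field_simp
    _ ≤ (7 / ε + 1) * ((N:ℝ) ^ ((1:ℝ)/3 + ε)) := by
        rw [hrpow]
        refine mul_le_mul_of_nonneg_right ?_ (by positivity)
        have h67 : (6:ℝ)/ε ≤ 7/ε := by gcongr <;> norm_num
        linarith
end

section
/- For every ε > 0 there exists a constant C > 0 with the following property. Let N ∈ ℕ and let A ⊆ [N] have distinct subset products, such that the map a ↦ (v_p(a))_{p prime, N^{1/3} < p ≤ N} is injective on A and every a ∈ A is divisible by some prime in (N^{1/3}, N]. Then one can remove a set E' of at most C·N^{5/12+ε} edges from the prime factorization graph G(A) so that the remaining graph contains no circuit of even length at most 2·N^{1/12}. -/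
namespace Stmt10Aux

open Finset

lemma log_le_rpow {ε x : ℝ} (hε : 0 < ε) (hx : 1 ≤ x) : Real.log x ≤ x ^ ε / ε := by
  have hx0 : (0:ℝ) < x := lt_of_lt_of_le one_pos hx
  have h1 : Real.log (x ^ ε) ≤ x ^ ε - 1 := Real.log_le_sub_one_of_pos (Real.rpow_pos_of_pos hx0 ε)
  rw [Real.log_rpow hx0] at h1
  have h2 : ε * Real.log x ≤ x ^ ε := by linarith
  rw [div_eq_inv_mul, ← inv_mul_cancel_left₀ (ne_of_gt hε) (Real.log x)]
  exact mul_le_mul_of_nonneg_left h2 (by positivity)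

lemma not_triple_dvd {N x y z a : ℕ} (hx : PLM N x) (hy : PLM N y) (hz : PLM N z)
    (ha : a ≤ N) (ha0 : 1 ≤ a) : ¬ (x * y * z ∣ a) := by
  intro h
  have h1 : x * y * z ≤ a := Nat.le_of_dvd ha0 h
  have hN0 : (0:ℝ) < (N:ℝ) := by
    have := hx.2.2; have := hx.1.two_le
    exact_mod_cast Nat.lt_of_lt_of_le (by omega) (by omega : 2 ≤ N)
  have hcube : (N:ℝ) ^ ((1:ℝ)/3) * (N:ℝ) ^ ((1:ℝ)/3) * (N:ℝ) ^ ((1:ℝ)/3) = (N:ℝ) := by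
    rw [← Real.rpow_add hN0, ← Real.rpow_add hN0]
    norm_num
  have hp : (0:ℝ) ≤ (N:ℝ) ^ ((1:ℝ)/3) := le_of_lt (Real.rpow_pos_of_pos hN0 _)
  have hlt : (N:ℝ) < (x:ℝ) * (y:ℝ) * (z:ℝ) := by
    calc (N:ℝ) = _ * _ * _ := hcube.symm
    _ < (x:ℝ) * (y:ℝ) * (z:ℝ) := by
        apply mul_lt_mul'' (mul_lt_mul'' hx.2.1 hy.2.1 hp hp) hz.2.1 (by positivity) hp
  have : (x*y*z : ℕ) ≤ N := le_trans h1 ha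
  have : ((x*y*z : ℕ) : ℝ) ≤ (N:ℝ) := by exact_mod_cast this
  push_cast at this
  linarith

open Classical in
/-- multiplicity of `p` in an edge `e`. -/
noncomputable def mult (e : Sym2 ℕ) (p : ℕ) : ℕ := if p ∈ e then 1 else 0

lemma mult_pos {e : Sym2 ℕ} {p : ℕ} (h : p ∈ e) : mult e p = 1 := by
  simp [mult, h]

lemma mult_neg {e : Sym2 ℕ} {p : ℕ} (h : p ∉ e) : mult e p = 0 := by
  simp [mult, h]

lemma mult_eq_one_iff {e : Sym2 ℕ} {p : ℕ} : mult e p = 1 ↔ p ∈ e := by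
  by_cases h : p ∈ e <;> simp [mult, h]

/-- The witness property: `a ∈ A` realizes edge `e` with the right valuations. -/
def WSpec (N : ℕ) (A : Finset ℕ) (e : Sym2 ℕ) (a : ℕ) : Prop :=
  a ∈ A ∧ ∀ p, PLM N p → a.factorization p = mult e p

lemma exists_witness {N : ℕ} {A : Finset ℕ} (hA : ↑A ⊆ Set.Icc 1 N) {x y : ℕ}
    (h : (pfGraph N A).Adj x y) : ∃ a, WSpec N A s(x, y) a := by
  obtain ⟨hne, hcase⟩ : _ ∧ _ := h
  rcases hcase with ⟨hx1, hy, a, haA, hval, hzero⟩ | ⟨hy1, hx, a, haA, hval, hzero⟩ |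
    ⟨hx, hy, a, haA, hxa, hya⟩
  · refine ⟨a, haA, fun p hp => ?_⟩
    rw [Nat.factorization_def _ hp.1]
    have hp1 : p ≠ 1 := hp.1.ne_one
    by_cases hpy : p = y
    · subst hpy; rw [hval, mult_pos (by subst hx1; simp [Sym2.mem_iff])]
    · rw [hzero p hp hpy, mult_neg (by subst hx1; simp [Sym2.mem_iff, hp1, hpy])]
  · refine ⟨a, haA, fun p hp => ?_⟩
    rw [Nat.factorization_def _ hp.1]
    have hp1 : p ≠ 1 := hp.1.ne_one
    by_cases hpx : p = x
    · subst hpx; rw [hval, mult_pos (by simp [Sym2.mem_iff])]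
    · rw [hzero p hp hpx, mult_neg (by subst hy1; simp [Sym2.mem_iff, hp1, hpx])]
  · have haI := hA haA
    have ha1 : 1 ≤ a := haI.1
    have haN : a ≤ N := haI.2
    have ha0 : a ≠ 0 := by omega
    have hxyne : x ≠ y := hne
    refine ⟨a, haA, fun p hp => ?_⟩
    by_cases hpx : p = x
    · subst hpx
      rw [mult_pos (by simp [Sym2.mem_iff])]
      have hge : 1 ≤ a.factorization p :=
        Nat.Prime.factorization_pos_of_dvd hp.1 ha0 hxa
      have hlt : a.factorization p < 2 := by
        by_contra hcon
        push_neg at hcon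
        have h2 : p ^ 2 ∣ a := dvd_trans (pow_dvd_pow p hcon) (Nat.ordProj_dvd a p)
        have hco : (p^2).Coprime y := Nat.Coprime.pow_left _
          ((Nat.coprime_primes hp.1 hy.1).mpr hxyne)
        have : p * p * y ∣ a := by
          have := hco.mul_dvd_of_dvd_of_dvd h2 hya
          rwa [pow_two] at this
        exact not_triple_dvd hp hp hy haN ha1 this
      omega
    · by_cases hpy : p = y
      · subst hpy
        rw [mult_pos (by simp [Sym2.mem_iff])]
        have hge : 1 ≤ a.factorization p :=
          Nat.Prime.factorization_pos_of_dvd hp.1 ha0 hya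
        have hlt : a.factorization p < 2 := by
          by_contra hcon
          push_neg at hcon
          have h2 : p ^ 2 ∣ a := dvd_trans (pow_dvd_pow p hcon) (Nat.ordProj_dvd a p)
          have hco : (p^2).Coprime x := Nat.Coprime.pow_left _
            ((Nat.coprime_primes hp.1 hx.1).mpr (Ne.symm hxyne))
          have : p * p * x ∣ a := by
            have := hco.mul_dvd_of_dvd_of_dvd h2 hxa
            rwa [pow_two] at this
          exact not_triple_dvd hp hp hx haN ha1 this
        omega
      · rw [mult_neg (by simp [Sym2.mem_iff, hpx, hpy])]
        apply Nat.factorization_eq_zero_of_not_dvd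
        intro hpa
        have hxy : x * y ∣ a :=
          Nat.Coprime.mul_dvd_of_dvd_of_dvd ((Nat.coprime_primes hx.1 hy.1).mpr hxyne) hxa hya
        have hco : (x*y).Coprime p :=
          Nat.Coprime.mul ((Nat.coprime_primes hx.1 hp.1).mpr (Ne.symm hpx))
            ((Nat.coprime_primes hy.1 hp.1).mpr (Ne.symm hpy))
        exact not_triple_dvd hx hy hp haN ha1 (hco.mul_dvd_of_dvd_of_dvd hxy hpa)

/-- Structure of edges of the graph. -/
lemma edge_structure {N : ℕ} {A : Finset ℕ} {e : Sym2 ℕ}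
    (he : e ∈ (pfGraph N A).edgeSet) :
    ∃ x y, e = s(x, y) ∧ ((x = 1 ∧ PLM N y) ∨ (PLM N x ∧ PLM N y ∧ x ≠ y)) := by
  induction e with
  | _ u v =>
    rw [SimpleGraph.mem_edgeSet] at he
    obtain ⟨hne, hcase⟩ : _ ∧ _ := he
    rcases hcase with ⟨hu, hv, -⟩ | ⟨hv, hu, -⟩ | ⟨hu, hv, -⟩
    · exact ⟨1, v, by rw [hu], Or.inl ⟨rfl, hv⟩⟩
    · exact ⟨1, u, by rw [hv, Sym2.eq_swap], Or.inl ⟨rfl, hu⟩⟩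
    · exact ⟨u, v, rfl, Or.inr ⟨hu, hv, hne⟩⟩

lemma edge_unique {N : ℕ} {A : Finset ℕ} {e e' : Sym2 ℕ}
    (he : e ∈ (pfGraph N A).edgeSet) (he' : e' ∈ (pfGraph N A).edgeSet) {a : ℕ}
    (h : ∀ p, PLM N p → a.factorization p = mult e p)
    (h' : ∀ p, PLM N p → a.factorization p = mult e' p) : e = e' := by
  have hmem : ∀ p, PLM N p → (p ∈ e ↔ p ∈ e') := by
    intro p hp
    have := (h p hp).symm.trans (h' p hp)
    constructor
    · intro hm; rw [mult_pos hm] at this; exact mult_eq_one_iff.mp this.symm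
    · intro hm; rw [mult_pos hm] at this; exact mult_eq_one_iff.mp this
  obtain ⟨x, y, rfl, hc⟩ := edge_structure he
  obtain ⟨x', y', rfl, hc'⟩ := edge_structure he'
  rcases hc with ⟨rfl, hy⟩ | ⟨hx, hy, hne⟩
  · rcases hc' with ⟨rfl, hy'⟩ | ⟨hx', hy', hne'⟩
    · have : y ∈ s(1, y') := (hmem y hy).mp (by simp [Sym2.mem_iff])
      rw [Sym2.mem_iff] at this
      rcases this with h1 | h1
      · exact absurd h1 hy.1.ne_one
      · rw [h1]
    · exfalso
      have hx'm : x' ∈ s(1, y) := (hmem x' hx').mpr (by simp [Sym2.mem_iff])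
      have hy'm : y' ∈ s(1, y) := (hmem y' hy').mpr (by simp [Sym2.mem_iff])
      rw [Sym2.mem_iff] at hx'm hy'm
      rcases hx'm with h1 | h1
      · exact hx'.1.ne_one h1
      · rcases hy'm with h2 | h2
        · exact hy'.1.ne_one h2
        · exact hne' (h1.trans h2.symm)
  · rcases hc' with ⟨rfl, hy'⟩ | ⟨hx', hy', hne'⟩
    · exfalso
      have hxm : x ∈ s(1, y') := (hmem x hx).mp (by simp [Sym2.mem_iff])
      have hym : y ∈ s(1, y') := (hmem y hy).mp (by simp [Sym2.mem_iff])
      rw [Sym2.mem_iff] at hxm hym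
      rcases hxm with h1 | h1
      · exact hx.1.ne_one h1
      · rcases hym with h2 | h2
        · exact hy.1.ne_one h2
        · exact hne (h1.trans h2.symm)
    · have hxm : x ∈ s(x', y') := (hmem x hx).mp (by simp [Sym2.mem_iff])
      have hym : y ∈ s(x', y') := (hmem y hy).mp (by simp [Sym2.mem_iff])
      rw [Sym2.mem_iff] at hxm hym
      rw [Sym2.eq_iff]
      rcases hxm with h1 | h1 <;> rcases hym with h2 | h2
      · exact absurd (h1.trans h2.symm) hne
      · exact Or.inl ⟨h1, h2⟩
      · exact Or.inr ⟨h1, h2⟩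
      · exact absurd (h1.trans h2.symm) hne

end Stmt10Aux

namespace Stmt10Aux

open Finset

lemma shift_sum {k : ℕ} (hk0 : 0 < k) (hkev : k % 2 = 0) (g : ℕ → ℕ) (r : ℕ) (hr : r < 2) :
    ∑ j ∈ (range k).filter (fun j => j % 2 = r), g ((j+1)%k)
      = ∑ t ∈ (range k).filter (fun t => t % 2 = 1 - r), g t := by
  refine Finset.sum_nbij' (fun j => (j+1)%k) (fun t => (t+(k-1))%k) ?_ ?_ ?_ ?_ ?_
  · intro j hj
    simp only [Finset.mem_filter, Finset.mem_range] at hj ⊢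
    refine ⟨Nat.mod_lt _ hk0, ?_⟩
    rcases Nat.lt_or_ge (j+1) k with h | h
    · rw [Nat.mod_eq_of_lt h]; omega
    · rw [show j+1 = k from by omega, Nat.mod_self]; omega
  · intro t ht
    simp only [Finset.mem_filter, Finset.mem_range] at ht ⊢
    refine ⟨Nat.mod_lt _ hk0, ?_⟩
    rcases Nat.eq_zero_or_pos t with rfl | ht1
    · rw [Nat.zero_add, Nat.mod_eq_of_lt (show k-1 < k from by omega)]; omega
    · rw [show t+(k-1) = (t-1)+k from by omega, Nat.add_mod_right,
        Nat.mod_eq_of_lt (show t-1 < k from by omega)]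
      omega
  · intro j hj
    simp only [Finset.mem_filter, Finset.mem_range] at hj
    show ((j+1)%k + (k-1)) % k = j
    rw [Nat.mod_add_mod, show (j+1)+(k-1) = j + k from by omega, Nat.add_mod_right,
      Nat.mod_eq_of_lt hj.1]
  · intro t ht
    simp only [Finset.mem_filter, Finset.mem_range] at ht
    show ((t+(k-1))%k + 1) % k = t
    rw [Nat.mod_add_mod, show t+(k-1)+1 = t + k from by omega, Nat.add_mod_right,
      Nat.mod_eq_of_lt ht.1]
  · intro j hj; rfl

lemma circuit_data {N : ℕ} {A : Finset ℕ} (hA : ↑A ⊆ Set.Icc 1 N)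
    (w : Sym2 ℕ → ℕ)
    (hw : ∀ e ∈ (pfGraph N A).edgeSet, WSpec N A e (w e))
    (hwinj : ∀ e ∈ (pfGraph N A).edgeSet, ∀ e' ∈ (pfGraph N A).edgeSet, w e = w e' → e = e')
    {l : List ℕ} (hne : l ≠ []) (hev : Even l.length)
    (hadj : ∀ p ∈ l.zip (l.rotate 1), (pfGraph N A).Adj p.1 p.2)
    (hnd : (circuitEdgeList l).Nodup) :
    ∃ B C : Finset ℕ, B ⊆ A ∧ C ⊆ A ∧ B.Nonempty ∧ Disjoint B C ∧
      (∀ x ∈ B ∪ C, ∃ e ∈ circuitEdgeList l, w e = x) ∧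
      ∀ p, PLM N p → (∏ b ∈ B, b).factorization p = (∏ c ∈ C, c).factorization p := by
  classical
  set k := l.length with hk
  have hk0 : 0 < k := List.length_pos_iff.mpr hne
  have hkev : k % 2 = 0 := Nat.even_iff.mp hev
  have hk2 : 2 ≤ k := by omega
  set EL := circuitEdgeList l with hEL
  have hlen : EL.length = k := by
    simp [hEL, circuitEdgeList, List.length_zip, List.length_rotate, hk]
  set v : ℕ → ℕ := fun j => l.getD j 0 with hv
  set ed : ℕ → Sym2 ℕ := fun j => EL.getD j s(0,0) with hed0
  have hmodlt : ∀ j, (j+1) % k < k := fun j => Nat.mod_lt _ hk0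
  have hed : ∀ j, j < k → ed j = s(v j, v ((j+1)%k)) := by
    intro j hj
    have hj1 : j < EL.length := by omega
    have hj2 : j < (l.zip (l.rotate 1)).length := by
      simp [List.length_zip, List.length_rotate]; omega
    have hj3 : j < l.length := hj
    have hj4 : (j+1) % k < l.length := hmodlt j
    rw [hed0]
    simp only
    rw [List.getD_eq_getElem EL _ hj1]
    simp only [hEL, circuitEdgeList, List.getElem_map, List.getElem_zip, List.getElem_rotate]
    rw [hv]
    simp only
    rw [List.getD_eq_getElem l 0 hj3, List.getD_eq_getElem l 0 hj4]
  have hadj' : ∀ j, j < k → (pfGraph N A).Adj (v j) (v ((j+1)%k)) := by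
    intro j hj
    have hj2 : j < (l.zip (l.rotate 1)).length := by
      simp [List.length_zip, List.length_rotate]; omega
    have hmem := List.getElem_mem hj2
    have h2 := hadj _ hmem
    rw [List.getElem_zip] at h2
    simp only at h2
    rw [List.getElem_rotate] at h2
    rw [hv]
    simp only
    rw [List.getD_eq_getElem l 0 hj, List.getD_eq_getElem l 0 (hmodlt j)]
    exact h2
  have hedmem : ∀ j, j < k → ed j ∈ EL := by
    intro j hj
    have hj1 : j < EL.length := by omega
    rw [hed0]; simp only
    rw [List.getD_eq_getElem EL _ hj1]
    exact List.getElem_mem hj1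
  have hedge : ∀ j, j < k → ed j ∈ (pfGraph N A).edgeSet := by
    intro j hj
    rw [hed j hj, SimpleGraph.mem_edgeSet]
    exact hadj' j hj
  have hedinj : ∀ j, j < k → ∀ j', j' < k → ed j = ed j' → j = j' := by
    intro j hj j' hj' hee
    have hj1 : j < EL.length := by omega
    have hj1' : j' < EL.length := by omega
    rw [hed0] at hee; simp only at hee
    rw [List.getD_eq_getElem EL _ hj1, List.getD_eq_getElem EL _ hj1'] at hee
    exact (hnd.getElem_inj_iff).mp hee
  set a : ℕ → ℕ := fun j => w (ed j) with ha
  have haA : ∀ j, j < k → a j ∈ A := fun j hj => (hw _ (hedge j hj)).1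
  have ha0 : ∀ j, j < k → a j ≠ 0 := by
    intro j hj
    have := (hA (haA j hj)).1; omega
  have haspec : ∀ j, j < k → ∀ p, PLM N p → (a j).factorization p = mult (ed j) p :=
    fun j hj => (hw _ (hedge j hj)).2
  have hainj : ∀ j, j < k → ∀ j', j' < k → a j = a j' → j = j' := by
    intro j hj j' hj' hee
    exact hedinj j hj j' hj' (hwinj _ (hedge j hj) _ (hedge j' hj') hee)
  set O : Finset ℕ := (range k).filter (fun j => j % 2 = 1) with hO
  set Ev : Finset ℕ := (range k).filter (fun j => j % 2 = 0) with hEv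
  have hOlt : ∀ j ∈ O, j < k := by intro j hj; rw [hO] at hj; simp at hj; omega
  have hEvlt : ∀ j ∈ Ev, j < k := by intro j hj; rw [hEv] at hj; simp at hj; omega
  refine ⟨O.image a, Ev.image a, ?_, ?_, ?_, ?_, ?_, ?_⟩
  · intro x hx
    obtain ⟨j, hj, rfl⟩ := Finset.mem_image.mp hx
    exact haA j (hOlt j hj)
  · intro x hx
    obtain ⟨j, hj, rfl⟩ := Finset.mem_image.mp hx
    exact haA j (hEvlt j hj)
  · exact ⟨a 1, Finset.mem_image_of_mem a (by rw [hO]; simp; omega)⟩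
  · rw [Finset.disjoint_left]
    intro x hx hx'
    obtain ⟨j, hj, rfl⟩ := Finset.mem_image.mp hx
    obtain ⟨j', hj', heq⟩ := Finset.mem_image.mp hx'
    have := hainj j' (hEvlt j' hj') j (hOlt j hj) heq
    subst this
    rw [hO] at hj; rw [hEv] at hj'; simp at hj hj'; omega
  · intro x hx
    rcases Finset.mem_union.mp hx with h | h
    · obtain ⟨j, hj, rfl⟩ := Finset.mem_image.mp h
      exact ⟨ed j, hedmem j (hOlt j hj), rfl⟩
    · obtain ⟨j, hj, rfl⟩ := Finset.mem_image.mp h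
      exact ⟨ed j, hedmem j (hEvlt j hj), rfl⟩
  · intro p hp
    have hprodB : (∏ b ∈ O.image a, b) = ∏ j ∈ O, a j :=
      Finset.prod_image (fun x hx y hy => hainj x (hOlt x hx) y (hOlt y hy))
    have hprodC : (∏ b ∈ Ev.image a, b) = ∏ j ∈ Ev, a j :=
      Finset.prod_image (fun x hx y hy => hainj x (hEvlt x hx) y (hEvlt y hy))
    rw [hprodB, hprodC,
      Nat.factorization_prod (fun j hj => ha0 j (hOlt j hj)),
      Nat.factorization_prod (fun j hj => ha0 j (hEvlt j hj)),
      Finset.sum_apply', Finset.sum_apply']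
    set g : ℕ → ℕ := fun t => if p = v t then 1 else 0 with hg
    have hterm : ∀ j, j < k → (a j).factorization p = g j + g ((j+1)%k) := by
      intro j hj
      rw [haspec j hj p hp, hed j hj]
      have hne2 : v j ≠ v ((j+1)%k) := (hadj' j hj).ne
      by_cases h1 : p = v j <;> by_cases h2 : p = v ((j+1)%k)
      · exact absurd (h1.symm.trans h2) hne2
      · rw [mult_pos (Sym2.mem_iff.mpr (Or.inl h1))]
        show 1 = (if p = v j then 1 else 0) + (if p = v ((j+1)%k) then 1 else 0)
        rw [if_pos h1, if_neg h2]
      · rw [mult_pos (Sym2.mem_iff.mpr (Or.inr h2))]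
        show 1 = (if p = v j then 1 else 0) + (if p = v ((j+1)%k) then 1 else 0)
        rw [if_neg h1, if_pos h2]
      · have hnm : p ∉ s(v j, v ((j+1)%k)) := by
          rw [Sym2.mem_iff]; push_neg; exact ⟨h1, h2⟩
        rw [mult_neg hnm]
        show 0 = (if p = v j then 1 else 0) + (if p = v ((j+1)%k) then 1 else 0)
        rw [if_neg h1, if_neg h2]
    rw [Finset.sum_congr rfl (fun j hj => hterm j (hOlt j hj)),
      Finset.sum_congr rfl (fun j hj => hterm j (hEvlt j hj)),
      Finset.sum_add_distrib, Finset.sum_add_distrib]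
    have hOE : ∑ j ∈ O, g ((j+1)%k) = ∑ t ∈ Ev, g t := by
      rw [hO, hEv]
      have := shift_sum hk0 hkev g 1 (by omega)
      simpa using this
    have hEO : ∑ j ∈ Ev, g ((j+1)%k) = ∑ t ∈ O, g t := by
      rw [hO, hEv]
      have := shift_sum hk0 hkev g 0 (by omega)
      simpa using this
    rw [hOE, hEO]
    exact Nat.add_comm _ _

end Stmt10Aux

set_option maxHeartbeats 1600000 in
/-- One can remove at most `C·N^{5/12+ε}` edges from the prime factorization graph so
that the remaining graph contains no circuit of even length at most `2·N^{1/12}`. -/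
theorem stmt10 : ∀ ε : ℝ, 0 < ε → ∃ C : ℝ, 0 < C ∧
    ∀ N : ℕ, ∀ A : Finset ℕ, ↑A ⊆ Set.Icc 1 N → DistinctSubsetProds ↑A →
    (∀ a ∈ A, ∀ b ∈ A, (∀ p : ℕ, PLM N p → padicValNat p a = padicValNat p b) → a = b) →
    (∀ a ∈ A, ∃ p : ℕ, PLM N p ∧ p ∣ a) →
    ∃ E' : Set (Sym2 ℕ), E' ⊆ (pfGraph N A).edgeSet ∧ E'.Finite ∧
      (E'.ncard : ℝ) ≤ C * (N : ℝ) ^ ((5 : ℝ) / 12 + ε) ∧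
      ∀ k : ℕ, ∀ E'' : Set (Sym2 ℕ), Even k → (k : ℝ) ≤ 2 * (N : ℝ) ^ ((1 : ℝ) / 12) →
        ¬ IsCircuit ((pfGraph N A).deleteEdges E') k E'' := by
  intro ε hε
  classical
  have hlog2 : (0:ℝ) < Real.log 2 := Real.log_pos (by norm_num)
  set C : ℝ := 8 * (2:ℝ) ^ ε / (ε * Real.log 2) with hCdef
  have hCpos : 0 < C := div_pos (by positivity) (mul_pos hε hlog2)
  refine ⟨C, hCpos, ?_⟩
  intro N A hA hDSP _h1 _h2
  set G := pfGraph N A with hGdef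
  -- global witness function
  have hwex : ∀ e : Sym2 ℕ, ∃ a, e ∈ G.edgeSet → Stmt10Aux.WSpec N A e a := by
    intro e
    by_cases h : e ∈ G.edgeSet
    · induction e with
      | _ u v =>
        obtain ⟨a, ha⟩ := Stmt10Aux.exists_witness hA (G.mem_edgeSet.mp h)
        exact ⟨a, fun _ => ha⟩
    · exact ⟨0, fun hh => absurd hh h⟩
  choose w hw using hwex
  have hwinj : ∀ e ∈ G.edgeSet, ∀ e' ∈ G.edgeSet, w e = w e' → e = e' := by
    intro e he e' he' heq
    exact Stmt10Aux.edge_unique he he' ((hw e) he).2 (by rw [heq]; exact ((hw e') he').2)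
  -- the family of (edge sets of) short even circuits
  set 𝒞 : Set (Finset (Sym2 ℕ)) :=
    {F | ∃ (k : ℕ) (E : Set (Sym2 ℕ)), Even k ∧ (k:ℝ) ≤ 2 * (N : ℝ) ^ ((1 : ℝ) / 12) ∧ IsCircuit G k E ∧ ↑F = E}
    with h𝒞def
  have h𝒞 : ∀ F ∈ 𝒞, (∀ e ∈ F, e ∈ G.edgeSet) ∧ F.Nonempty ∧
      ((F.card : ℝ) ≤ 2 * (N : ℝ) ^ ((1 : ℝ) / 12)) ∧
      ∃ B C : Finset ℕ, B ⊆ A ∧ C ⊆ A ∧ B.Nonempty ∧ Disjoint B C ∧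
        (∀ x ∈ B ∪ C, ∃ e ∈ F, w e = x) ∧
        ∀ p, PLM N p → (∏ b ∈ B, b).factorization p = (∏ c ∈ C, c).factorization p := by
    rintro F ⟨k, E, hkev, hkK, ⟨l, hl, hlne, hladj, hlnd, hE⟩, hFE⟩
    have hmemF : ∀ e, e ∈ F ↔ e ∈ circuitEdgeList l := by
      intro e
      rw [← Finset.mem_coe, hFE, hE]
      rfl
    have hesub : ∀ e ∈ F, e ∈ G.edgeSet := by
      intro e he
      rw [hmemF] at he
      obtain ⟨pr, hpr, rfl⟩ := List.mem_map.mp he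
      exact G.mem_edgeSet.mpr (hladj pr hpr)
    have hFeq : F = (circuitEdgeList l).toFinset := by
      apply Finset.coe_injective
      rw [hFE, hE, List.coe_toFinset]
    have hELlen : (circuitEdgeList l).length = k := by
      simp [circuitEdgeList, List.length_zip, List.length_rotate, hl]
    have hFcard : F.card = k := by
      rw [hFeq, List.toFinset_card_of_nodup hlnd, hELlen]
    have hk0 : 0 < k := by
      rw [← hl]
      exact List.length_pos_iff.mpr hlne
    refine ⟨hesub, ?_, by rw [hFcard]; exact hkK, ?_⟩
    · rw [← Finset.card_pos, hFcard]; exact hk0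
    · have hev' : Even l.length := by rw [hl]; exact hkev
      obtain ⟨B, C, hB, hC, hBne, hBC, hcov, hval⟩ :=
        Stmt10Aux.circuit_data hA w (fun e he => hw e he) hwinj hlne hev' hladj hlnd
      refine ⟨B, C, hB, hC, hBne, hBC, ?_, hval⟩
      intro x hx
      obtain ⟨e, he, hwe⟩ := hcov x hx
      exact ⟨e, (hmemF e).mpr he, hwe⟩
  -- bounding box for edges
  set EF : Finset (Sym2 ℕ) :=
    ((Finset.range (N+2)) ×ˢ (Finset.range (N+2))).image (fun pq => s(pq.1, pq.2)) with hEFdef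
  have hedgeEF : ∀ e ∈ G.edgeSet, e ∈ EF := by
    intro e he
    obtain ⟨x, y, rfl, hc⟩ := Stmt10Aux.edge_structure he
    have hx : x < N + 2 := by
      rcases hc with ⟨rfl, hy⟩ | ⟨hx, -, -⟩
      · omega
      · have := hx.2.2; omega
    have hy : y < N + 2 := by
      rcases hc with ⟨-, hy⟩ | ⟨-, hy, -⟩ <;> (have := hy.2.2; omega)
    exact Finset.mem_image.mpr ⟨(x, y), by
      simp only [Finset.mem_product, Finset.mem_range]; exact ⟨hx, hy⟩, rfl⟩
  -- maximal pairwise disjoint family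
  set pred : Finset (Finset (Sym2 ℕ)) → Prop :=
    fun M => ↑M ⊆ 𝒞 ∧ ∀ σ ∈ M, ∀ τ ∈ M, σ ≠ τ → Disjoint σ τ with hpreddef
  set 𝒟 : Finset (Finset (Finset (Sym2 ℕ))) := EF.powerset.powerset.filter pred with h𝒟def
  have h𝒟ne : 𝒟.Nonempty := by
    refine ⟨∅, Finset.mem_filter.mpr ⟨Finset.mem_powerset.mpr (Finset.empty_subset _), ?_⟩⟩
    constructor
    · intro x hx; exact absurd hx (Finset.notMem_empty x)
    · intro σ hσ; exact absurd hσ (Finset.notMem_empty σ)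
  obtain ⟨M, hM𝒟, hMmax⟩ := Finset.exists_max_image 𝒟 Finset.card h𝒟ne
  have hMpred : pred M := (Finset.mem_filter.mp hM𝒟).2
  have hM𝒞 : ∀ σ ∈ M, σ ∈ 𝒞 := fun σ hσ => hMpred.1 hσ
  have hMdisj : ∀ σ ∈ M, ∀ τ ∈ M, σ ≠ τ → Disjoint σ τ := hMpred.2
  have hhit : ∀ F ∈ 𝒞, ∃ σ ∈ M, ¬ Disjoint F σ := by
    intro F hF
    by_contra hcon
    push_neg at hcon
    have hFne : F.Nonempty := (h𝒞 F hF).2.1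
    have hFM : F ∉ M := by
      intro hFM
      have := hcon F hFM
      rw [disjoint_self] at this
      rw [this] at hFne
      exact Finset.not_nonempty_empty hFne
    have hFEF : F ⊆ EF := fun e he => hedgeEF e ((h𝒞 F hF).1 e he)
    have hins : insert F M ∈ 𝒟 := by
      rw [h𝒟def, Finset.mem_filter]
      constructor
      · rw [Finset.mem_powerset]
        intro σ hσ
        rcases Finset.mem_insert.mp hσ with rfl | hσ
        · exact Finset.mem_powerset.mpr hFEF
        · exact Finset.mem_powerset.mp (Finset.mem_filter.mp hM𝒟).1 hσ
      · constructor
        · intro σ hσ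
          rcases Finset.mem_insert.mp (by exact_mod_cast hσ) with rfl | hσ'
          · exact hF
          · exact hM𝒞 σ hσ'
        · intro σ hσ τ hτ hne
          rcases Finset.mem_insert.mp hσ with rfl | hσ' <;>
            rcases Finset.mem_insert.mp hτ with rfl | hτ'
          · exact absurd rfl hne
          · exact hcon τ hτ'
          · exact (hcon σ hσ').symm
          · exact hMdisj σ hσ' τ hτ' hne
    have := hMmax _ hins
    rw [Finset.card_insert_of_notMem hFM] at this
    omega
  set D : Finset (Sym2 ℕ) := M.biUnion id with hDdef
  have hDedge : ∀ e ∈ D, e ∈ G.edgeSet := by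
    intro e he
    obtain ⟨σ, hσ, heσ⟩ := Finset.mem_biUnion.mp he
    exact (h𝒞 σ (hM𝒞 σ hσ)).1 e heσ
  refine ⟨↑D, fun e he => hDedge e he, D.finite_toSet, ?_, ?_⟩
  · -- cardinality bound
    rw [Set.ncard_coe_finset]
    rcases Nat.eq_zero_or_pos N with hN00 | hN1
    · -- N = 0 : there are no edges, so M = ∅
      have hM0 : M = ∅ := by
        rw [Finset.eq_empty_iff_forall_notMem]
        intro σ hσ
        obtain ⟨e, he⟩ := (h𝒞 σ (hM𝒞 σ hσ)).2.1
        obtain ⟨x, y, rfl, hc⟩ := Stmt10Aux.edge_structure ((h𝒞 σ (hM𝒞 σ hσ)).1 _ he)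
        have hplm : ∃ q, PLM N q := by
          rcases hc with ⟨-, hy⟩ | ⟨hx, -, -⟩
          exacts [⟨y, hy⟩, ⟨x, hx⟩]
        obtain ⟨q, hq⟩ := hplm
        have h1 := hq.1.two_le
        have h2 := hq.2.2
        omega
      rw [hDdef, hM0]
      simp only [Finset.biUnion_empty, Finset.card_empty, Nat.cast_zero]
      exact mul_nonneg hCpos.le (Real.rpow_nonneg (Nat.cast_nonneg N) _)
    · -- N ≥ 1 : the main count
      have hN0' : (0:ℝ) < (N:ℝ) := by exact_mod_cast hN1
      have hN1' : (1:ℝ) ≤ (N:ℝ) := by exact_mod_cast hN1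
      have hBCex : ∀ σ : Finset (Sym2 ℕ), ∃ B C : Finset ℕ, σ ∈ M →
          (B ⊆ A ∧ C ⊆ A ∧ B.Nonempty ∧ Disjoint B C ∧
          (∀ x ∈ B ∪ C, ∃ e ∈ σ, w e = x) ∧
          ∀ p, PLM N p → (∏ b ∈ B, b).factorization p = (∏ c ∈ C, c).factorization p) := by
        intro σ
        by_cases h : σ ∈ M
        · obtain ⟨-, -, -, B, C, hBC⟩ := h𝒞 σ (hM𝒞 σ h)
          exact ⟨B, C, fun _ => hBC⟩
        · exact ⟨∅, ∅, fun hh => absurd hh h⟩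
      choose BB CC hBC using hBCex
      have hcross : ∀ σ ∈ M, ∀ τ ∈ M, σ ≠ τ → ∀ x, x ∈ BB σ ∪ CC σ → x ∉ BB τ ∪ CC τ := by
        intro σ hσ τ hτ hne x hx hx'
        obtain ⟨e, he, hwe⟩ := (hBC σ hσ).2.2.2.2.1 x hx
        obtain ⟨e', he', hwe'⟩ := (hBC τ hτ).2.2.2.2.1 x hx'
        have heE : e ∈ G.edgeSet := (h𝒞 σ (hM𝒞 σ hσ)).1 e he
        have he'E : e' ∈ G.edgeSet := (h𝒞 τ (hM𝒞 τ hτ)).1 e' he'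
        have hee : e = e' := hwinj e heE e' he'E (hwe.trans hwe'.symm)
        subst hee
        exact Finset.disjoint_left.mp (hMdisj σ hσ τ hτ hne) he he'
      obtain ⟨fu, hfu⟩ : ∃ fu : Finset (Finset (Sym2 ℕ)) → Finset (Sym2 ℕ) → Finset ℕ,
          ∀ S σ, (σ ∈ S → fu S σ = BB σ) ∧ (σ ∉ S → fu S σ = CC σ) :=
        ⟨fun S σ => if σ ∈ S then BB σ else CC σ,
          fun S σ => ⟨fun h => if_pos h, fun h => if_neg h⟩⟩
      have hfusub : ∀ S σ, fu S σ ⊆ BB σ ∪ CC σ := by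
        intro S σ
        by_cases h : σ ∈ S
        · rw [(hfu S σ).1 h]; exact Finset.subset_union_left
        · rw [(hfu S σ).2 h]; exact Finset.subset_union_right
      have hfuA : ∀ S σ, σ ∈ M → fu S σ ⊆ A := by
        intro S σ hσ
        exact (hfusub S σ).trans (Finset.union_subset (hBC σ hσ).1 (hBC σ hσ).2.1)
      have hfu0 : ∀ S, ∀ σ ∈ M, (∏ b ∈ fu S σ, b) ≠ 0 := by
        intro S σ hσ
        have hpp : 0 < ∏ b ∈ fu S σ, b := Finset.prod_pos (fun b hb => by
          have := (hA (hfuA S σ hσ hb)).1; omega)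
        omega
      set P : Finset (Finset (Sym2 ℕ)) → ℕ := fun S => ∏ σ ∈ M, ∏ b ∈ fu S σ, b with hPdef
      have hP0 : ∀ S, P S ≠ 0 := by
        intro S
        exact Finset.prod_ne_zero_iff.mpr (fun σ hσ => hfu0 S σ hσ)
      have hPU : ∀ S, P S = ∏ b ∈ M.biUnion (fu S), b := by
        intro S
        exact (Finset.prod_biUnion (fun σ hσ τ hτ hne => Finset.disjoint_left.mpr
          (fun x hx hx' => hcross σ hσ τ hτ hne x (hfusub S σ hx) (hfusub S τ hx')))).symm
      have hUA : ∀ S, ↑(M.biUnion (fu S)) ⊆ (↑A : Set ℕ) := by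
        intro S x hx
        obtain ⟨σ, hσ, hxσ⟩ := Finset.mem_biUnion.mp hx
        exact hfuA S σ hσ hxσ
      have hPinj : ∀ S, S ⊆ M → ∀ S', S' ⊆ M → P S = P S' → S = S' := by
        have key : ∀ S₁, S₁ ⊆ M → ∀ S₂, S₂ ⊆ M →
            M.biUnion (fu S₁) = M.biUnion (fu S₂) → S₁ ⊆ S₂ := by
          intro S₁ h₁ S₂ h₂ hU σ hσS
          have hσM := h₁ hσS
          by_contra hσS₂
          obtain ⟨x, hxB⟩ := (hBC σ hσM).2.2.1
          have hx1 : x ∈ M.biUnion (fu S₁) :=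
            Finset.mem_biUnion.mpr ⟨σ, hσM, by rw [(hfu S₁ σ).1 hσS]; exact hxB⟩
          rw [hU] at hx1
          obtain ⟨τ, hτM, hxτ⟩ := Finset.mem_biUnion.mp hx1
          by_cases hστ : σ = τ
          · subst hστ
            rw [(hfu S₂ σ).2 hσS₂] at hxτ
            exact Finset.disjoint_left.mp (hBC σ hσM).2.2.2.1 hxB hxτ
          · exact hcross σ hσM τ hτM hστ x (Finset.mem_union_left _ hxB) (hfusub S₂ τ hxτ)
        intro S hS S' hS' hPP
        have hU : M.biUnion (fu S) = M.biUnion (fu S') :=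
          hDSP _ _ (hUA S) (hUA S') (by rw [← hPU, ← hPU]; exact hPP)
        exact Finset.Subset.antisymm (key S hS S' hS' hU) (key S' hS' S hS hU.symm)
      have hval1 : ∀ p, PLM N p → ∀ S, (P S).factorization p = (P ∅).factorization p := by
        intro p hp S
        show (∏ σ ∈ M, ∏ b ∈ fu S σ, b).factorization p
          = (∏ σ ∈ M, ∏ b ∈ fu ∅ σ, b).factorization p
        rw [Nat.factorization_prod (fun σ hσ => hfu0 S σ hσ),
          Nat.factorization_prod (fun σ hσ => hfu0 ∅ σ hσ),
          Finset.sum_apply', Finset.sum_apply']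
        apply Finset.sum_congr rfl
        intro σ hσ
        rw [(hfu ∅ σ).2 (Finset.notMem_empty σ)]
        by_cases h : σ ∈ S
        · rw [(hfu S σ).1 h]
          exact (hBC σ hσ).2.2.2.2.2 p hp
        · rw [(hfu S σ).2 h]
      have hval2 : ∀ q, q.Prime → N < q → ∀ S, (P S).factorization q = 0 := by
        intro q hq hNq S
        apply Nat.factorization_eq_zero_of_not_dvd
        intro hdvd
        rw [hPU S] at hdvd
        obtain ⟨x, hx, hqx⟩ := (Prime.dvd_finset_prod_iff hq.prime _).mp hdvd
        have hxA := hA (hUA S hx)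
        have hq1 : q ≤ x := Nat.le_of_dvd (by have := hxA.1; omega) hqx
        have := hxA.2
        omega
      have hAcard : A.card ≤ N := by
        have hsub : A ⊆ Finset.Icc 1 N := fun x hx => Finset.mem_Icc.mpr (hA hx)
        calc A.card ≤ (Finset.Icc 1 N).card := Finset.card_le_card hsub
        _ = N := by rw [Nat.card_Icc]; omega
      have hPle : ∀ S, P S ≤ (N+1)^N := by
        intro S
        rw [hPU S]
        calc ∏ b ∈ M.biUnion (fu S), b ≤ ∏ a ∈ A, a := by
              apply Finset.prod_le_prod_of_subset_of_one_le'
                (fun x hx => Finset.mem_coe.mp (hUA S (Finset.mem_coe.mpr hx)))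
              intro i hi _
              exact (hA hi).1
        _ ≤ N ^ A.card := Finset.prod_le_pow_card _ _ _ (fun x hx => (hA hx).2)
        _ ≤ (N+1) ^ A.card := Nat.pow_le_pow_left (by omega) _
        _ ≤ (N+1) ^ N := Nat.pow_le_pow_right (by omega) hAcard
      set SP : Finset ℕ :=
        (Finset.range (N+1)).filter (fun p => p.Prime ∧ (p:ℝ) ≤ (N:ℝ)^((1:ℝ)/3)) with hSPdef
      set L : ℕ := Nat.log 2 ((N+1)^N) with hLdef
      have hH0 : (N+1)^N ≠ 0 := (pow_pos (by omega) N).ne'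
      have hfle : ∀ S, ∀ p : ℕ, 2 ≤ p → (P S).factorization p < L + 1 := by
        intro S p hp2
        have h1 : 2 ^ (P S).factorization p ≤ (N+1)^N :=
          le_trans (Nat.pow_le_pow_left hp2 _)
            (le_trans (Nat.ordProj_le p (hP0 S)) (hPle S))
        have h2 := (Nat.le_log_iff_pow_le (by norm_num) hH0).mpr h1
        omega
      have hcount : 2 ^ M.card ≤ (L+1) ^ SP.card := by
        have hinj : M.powerset.card ≤
            (Finset.univ : Finset ({x // x ∈ SP} → Fin (L+1))).card := by
          apply Finset.card_le_card_of_injOn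
            (fun S => fun p : {x // x ∈ SP} =>
              (⟨(P S).factorization p.1,
                hfle S p.1 ((Finset.mem_filter.mp p.2).2.1).two_le⟩ : Fin (L+1)))
            (fun _ _ => Finset.mem_univ _)
          intro S hS S' hS' hff
          simp only [Finset.mem_coe, Finset.mem_powerset] at hS hS'
          apply hPinj S hS S' hS'
          have hfact : (P S).factorization = (P S').factorization := by
            ext q
            by_cases hq : q.Prime
            · by_cases hsmall : (q:ℝ) ≤ (N:ℝ)^((1:ℝ)/3)
              · have hq3 : (N:ℝ)^((1:ℝ)/3) ≤ (N:ℝ) := by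
                  calc (N:ℝ)^((1:ℝ)/3) ≤ (N:ℝ)^(1:ℝ) :=
                    Real.rpow_le_rpow_of_exponent_le hN1' (by norm_num)
                  _ = (N:ℝ) := Real.rpow_one _
                have hqN : q < N+1 := by
                  have : (q:ℝ) ≤ (N:ℝ) := le_trans hsmall hq3
                  exact_mod_cast Nat.lt_succ_of_le (by exact_mod_cast this)
                have hqSP : q ∈ SP := Finset.mem_filter.mpr
                  ⟨Finset.mem_range.mpr hqN, hq, hsmall⟩
                have := congrArg Fin.val (congrFun hff ⟨q, hqSP⟩)
                exact this
              · push_neg at hsmall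
                by_cases hqN : q ≤ N
                · have hplm : PLM N q := ⟨hq, hsmall, hqN⟩
                  rw [hval1 q hplm S, hval1 q hplm S']
                · push_neg at hqN
                  rw [hval2 q hq hqN S, hval2 q hq hqN S']
            · rw [Nat.factorization_eq_zero_of_not_prime _ hq,
                Nat.factorization_eq_zero_of_not_prime _ hq]
          exact Nat.factorization_inj (hP0 S) (hP0 S') hfact
        rwa [Finset.card_powerset, Finset.card_univ, Fintype.card_fun,
          Fintype.card_fin, Fintype.card_coe] at hinj
      -- real-number chain
      have hTlog : (M.card : ℝ) * Real.log 2 ≤ (SP.card : ℝ) * Real.log ((L:ℝ)+1) := by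
        have h2 : ((2:ℝ)) ^ M.card ≤ ((L:ℝ)+1) ^ SP.card := by
          have := hcount
          have hcast : ((2 ^ M.card : ℕ) : ℝ) ≤ (((L+1) ^ SP.card : ℕ) : ℝ) := by
            exact_mod_cast this
          push_cast at hcast
          exact_mod_cast hcast
        have hlog := Real.log_le_log (by positivity) h2
        rwa [Real.log_pow, Real.log_pow] at hlog
      have hdle : (SP.card : ℝ) ≤ 2 * (N:ℝ)^((1:ℝ)/3) := by
        have hsub : SP ⊆ Finset.range (⌊(N:ℝ)^((1:ℝ)/3)⌋₊ + 1) := by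
          intro p hp
          rw [hSPdef, Finset.mem_filter] at hp
          exact Finset.mem_range.mpr (by have := Nat.le_floor hp.2.2; omega)
        have hcard := Finset.card_le_card hsub
        rw [Finset.card_range] at hcard
        have hfl : ((⌊(N:ℝ)^((1:ℝ)/3)⌋₊ : ℕ):ℝ) ≤ (N:ℝ)^((1:ℝ)/3) :=
          Nat.floor_le (by positivity)
        have hge1 : (1:ℝ) ≤ (N:ℝ)^((1:ℝ)/3) := by
          calc (1:ℝ) = (1:ℝ)^((1:ℝ)/3) := (Real.one_rpow _).symm
          _ ≤ (N:ℝ)^((1:ℝ)/3) := Real.rpow_le_rpow (by norm_num) hN1' (by norm_num)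
        have : (SP.card : ℝ) ≤ ((⌊(N:ℝ)^((1:ℝ)/3)⌋₊ : ℕ):ℝ) + 1 := by exact_mod_cast hcard
        linarith
      have hLle : L + 1 ≤ (N+1)^2 := by
        have h1 : (N+1) ≤ 2 ^ (Nat.log 2 (N+1) + 1) :=
          le_of_lt (Nat.lt_pow_succ_log_self (by norm_num) _)
        have h2 : (N+1)^N ≤ 2 ^ (N * (Nat.log 2 (N+1) + 1)) := by
          calc (N+1)^N ≤ (2 ^ (Nat.log 2 (N+1) + 1))^N := Nat.pow_le_pow_left h1 N
          _ = 2 ^ (N * (Nat.log 2 (N+1)+1)) := by rw [← pow_mul, Nat.mul_comm]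
        have h3 : L ≤ N * (Nat.log 2 (N+1) + 1) := by
          rw [hLdef]
          calc Nat.log 2 ((N+1)^N) ≤ Nat.log 2 (2 ^ (N * (Nat.log 2 (N+1) + 1))) :=
            Nat.log_mono_right h2
          _ = N * (Nat.log 2 (N+1) + 1) := Nat.log_pow (by norm_num) _
        have h4 : Nat.log 2 (N+1) ≤ N := by
          calc Nat.log 2 (N+1) ≤ Nat.log 2 (2^N) := Nat.log_mono_right (Nat.lt_two_pow_self (n := N))
          _ = N := Nat.log_pow (by norm_num) N
        have h5 : N * (Nat.log 2 (N+1) + 1) + 1 ≤ (N+1)^2 := by nlinarith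
        omega
      have hlogle : Real.log ((L:ℝ)+1) ≤ 2 * Real.log ((N:ℝ)+1) := by
        have h1 : ((L:ℝ)+1) ≤ (((N+1):ℕ):ℝ)^(2:ℕ) := by
          have : ((L+1 : ℕ):ℝ) ≤ (((N+1)^2 : ℕ):ℝ) := by exact_mod_cast hLle
          push_cast at this ⊢
          linarith
        have h2 := Real.log_le_log (by positivity) h1
        rw [Real.log_pow] at h2
        push_cast at h2 ⊢
        linarith
      have hlogN : Real.log ((N:ℝ)+1) ≤ (1/ε) * ((2:ℝ)^ε * (N:ℝ)^ε) := by
        have h1 : Real.log ((N:ℝ)+1) ≤ ((N:ℝ)+1)^ε / ε :=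
          Stmt10Aux.log_le_rpow hε (by linarith)
        have h2 : ((N:ℝ)+1)^ε ≤ ((2:ℝ)*(N:ℝ))^ε :=
          Real.rpow_le_rpow (by positivity) (by linarith) (le_of_lt hε)
        rw [Real.mul_rpow (by norm_num) (by positivity)] at h2
        calc Real.log ((N:ℝ)+1) ≤ ((N:ℝ)+1)^ε / ε := h1
        _ ≤ ((2:ℝ)^ε * (N:ℝ)^ε) / ε := by gcongr
        _ = (1/ε) * ((2:ℝ)^ε * (N:ℝ)^ε) := by ring
      have hlogL2 : Real.log ((L:ℝ)+1) ≤ 2 * ((1/ε) * ((2:ℝ)^ε * (N:ℝ)^ε)) := by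
        calc Real.log ((L:ℝ)+1) ≤ 2 * Real.log ((N:ℝ)+1) := hlogle
        _ ≤ 2 * ((1/ε) * ((2:ℝ)^ε * (N:ℝ)^ε)) := by linarith
      have hlogLnn : (0:ℝ) ≤ Real.log ((L:ℝ)+1) := Real.log_nonneg (by
        have : (0:ℝ) ≤ (L:ℝ) := Nat.cast_nonneg L
        linarith)
      have hTb : (M.card : ℝ) * Real.log 2 ≤
          (2 * (N:ℝ)^((1:ℝ)/3)) * (2 * ((1/ε) * ((2:ℝ)^ε * (N:ℝ)^ε))) := by
        calc (M.card : ℝ) * Real.log 2 ≤ (SP.card : ℝ) * Real.log ((L:ℝ)+1) := hTlog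
        _ ≤ (2 * (N:ℝ)^((1:ℝ)/3)) * Real.log ((L:ℝ)+1) :=
            mul_le_mul_of_nonneg_right hdle hlogLnn
        _ ≤ (2 * (N:ℝ)^((1:ℝ)/3)) * (2 * ((1/ε) * ((2:ℝ)^ε * (N:ℝ)^ε))) :=
            mul_le_mul_of_nonneg_left hlogL2 (by positivity)
      have hMb : (M.card : ℝ) ≤
          (4 * (2:ℝ)^ε / (ε * Real.log 2)) * ((N:ℝ)^((1:ℝ)/3) * (N:ℝ)^ε) := by
        rw [div_mul_eq_mul_div, le_div_iff₀ (mul_pos hε hlog2)]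
        calc (M.card : ℝ) * (ε * Real.log 2) = ((M.card : ℝ) * Real.log 2) * ε := by ring
        _ ≤ ((2 * (N:ℝ)^((1:ℝ)/3)) * (2 * ((1/ε) * ((2:ℝ)^ε * (N:ℝ)^ε)))) * ε := by
            apply mul_le_mul_of_nonneg_right hTb (le_of_lt hε)
        _ = 4 * (2:ℝ)^ε * ((N:ℝ)^((1:ℝ)/3) * (N:ℝ)^ε) * (ε / ε) := by ring
        _ = 4 * (2:ℝ)^ε * ((N:ℝ)^((1:ℝ)/3) * (N:ℝ)^ε) := by
            rw [div_self (ne_of_gt hε), mul_one]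
      have hDb : (D.card : ℝ) ≤ (M.card : ℝ) * (2 * (N:ℝ)^((1:ℝ)/12)) := by
        have h1 : D.card ≤ ∑ σ ∈ M, σ.card := by
          rw [hDdef]
          exact le_trans (Finset.card_biUnion_le) (le_of_eq rfl)
        calc (D.card : ℝ) ≤ ((∑ σ ∈ M, σ.card : ℕ) : ℝ) := by exact_mod_cast h1
        _ = ∑ σ ∈ M, (σ.card : ℝ) := by push_cast; ring
        _ ≤ ∑ _σ ∈ M, (2 * (N:ℝ)^((1:ℝ)/12)) :=
            Finset.sum_le_sum (fun σ hσ => (h𝒞 σ (hM𝒞 σ hσ)).2.2.1)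
        _ = (M.card : ℝ) * (2 * (N:ℝ)^((1:ℝ)/12)) := by
            rw [Finset.sum_const, nsmul_eq_mul]
      calc (D.card : ℝ) ≤ (M.card : ℝ) * (2 * (N:ℝ)^((1:ℝ)/12)) := hDb
      _ ≤ ((4 * (2:ℝ)^ε / (ε * Real.log 2)) * ((N:ℝ)^((1:ℝ)/3) * (N:ℝ)^ε)) *
          (2 * (N:ℝ)^((1:ℝ)/12)) := by
          apply mul_le_mul_of_nonneg_right hMb (by positivity)
      _ = (8 * (2:ℝ)^ε / (ε * Real.log 2)) *
          ((N:ℝ)^((1:ℝ)/3) * (N:ℝ)^ε * (N:ℝ)^((1:ℝ)/12)) := by ring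
      _ = (8 * (2:ℝ)^ε / (ε * Real.log 2)) * (N:ℝ)^((5:ℝ)/12 + ε) := by
          congr 1
          rw [← Real.rpow_add hN0', ← Real.rpow_add hN0']
          congr 1
          ring
      _ = C * (N:ℝ)^((5:ℝ)/12 + ε) := by rw [hCdef]

  · -- no short even circuit remains
    rintro k E'' hkev hkK ⟨l, hl, hlne, hladj, hlnd, hE⟩
    have hladj' : ∀ p ∈ l.zip (l.rotate 1), G.Adj p.1 p.2 := by
      intro p hp
      exact ((SimpleGraph.deleteEdges_adj).mp (hladj p hp)).1
    have hF𝒞 : (circuitEdgeList l).toFinset ∈ 𝒞 :=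
      ⟨k, {e | e ∈ circuitEdgeList l}, hkev, hkK,
        ⟨l, hl, hlne, hladj', hlnd, rfl⟩, List.coe_toFinset (circuitEdgeList l)⟩
    obtain ⟨σ, hσM, hndisj⟩ := hhit _ hF𝒞
    rw [Finset.not_disjoint_iff] at hndisj
    obtain ⟨e, heF, heσ⟩ := hndisj
    rw [List.mem_toFinset] at heF
    obtain ⟨pr, hpr, rfl⟩ := List.mem_map.mp heF
    have hdel := ((SimpleGraph.deleteEdges_adj).mp (hladj pr hpr)).2
    exact hdel (Finset.mem_coe.mpr (Finset.mem_biUnion.mpr ⟨σ, hσM, heσ⟩))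
end
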